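/- arXiv:1410.3058 — 7 statements merged into one kernel-verified Lean document; each statement's English description precedes it below -/
import Mathlib

section
/- Let g : [0,∞) → [0,∞) be of class K∞ with inverse g⁻¹. Then for all a, b ≥ 0 and all ω > 0 it holds that a·b ≤ ω·a·g(a) + b·g⁻¹(b/ω). -/
open Real

/-- The **K∞-inequality** (Proposition A.2 of the paper): if `g` is of class
`K∞` on `[0,∞)` (continuous, strictly increasing, unbounded, `g 0 = 0`) with
inverse `ginv` on `[0,∞)`, then for all `a, b ≥ 0` and `ω > 0`,
`a·b ≤ ω·a·g(a) + b·ginv(b/ω)`. -/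
theorem Kinf_inequality (g ginv : ℝ → ℝ)
    (hg_cont : ContinuousOn g (Set.Ici 0))
    (hg_mono : StrictMonoOn g (Set.Ici 0))
    (hg0 : g 0 = 0)
    (hg_unbdd : ∀ M : ℝ, ∃ s : ℝ, 0 ≤ s ∧ M ≤ g s)
    (hg_nonneg : ∀ s : ℝ, 0 ≤ s → 0 ≤ g s)
    (hinv_left : ∀ s : ℝ, 0 ≤ s → ginv (g s) = s)
    (hinv_right : ∀ s : ℝ, 0 ≤ s → g (ginv s) = s)
    (hinv_nonneg : ∀ s : ℝ, 0 ≤ s → 0 ≤ ginv s) :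
    ∀ a b : ℝ, 0 ≤ a → 0 ≤ b → ∀ ω : ℝ, 0 < ω →
      a * b ≤ ω * a * g a + b * ginv (b / ω) := by
  intro a b ha hb ω hω
  have hbw : (0:ℝ) ≤ b / ω := div_nonneg hb hω.le
  by_cases h : b / ω ≤ g a
  · have h1 : a * b ≤ ω * a * g a := by
      have : a * (b / ω) ≤ a * g a := mul_le_mul_of_nonneg_left h ha
      calc a * b = ω * (a * (b / ω)) := by field_simp
        _ ≤ ω * (a * g a) := mul_le_mul_of_nonneg_left this hω.le
        _ = ω * a * g a := by ring
    have h2 : (0:ℝ) ≤ b * ginv (b / ω) := mul_nonneg hb (hinv_nonneg _ hbw)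
    linarith
  · push_neg at h
    have ha' : a ≤ ginv (b / ω) := by
      by_contra hc
      push_neg at hc
      have := hg_mono (Set.mem_Ici.2 (hinv_nonneg _ hbw)) (Set.mem_Ici.2 ha) hc
      rw [hinv_right _ hbw] at this
      linarith
    have h1 : a * b ≤ b * ginv (b / ω) := by
      calc a * b = b * a := mul_comm a b
        _ ≤ b * ginv (b / ω) := mul_le_mul_of_nonneg_left ha' hb
    have h2 : (0:ℝ) ≤ ω * a * g a := mul_nonneg (mul_nonneg hω.le ha) (hg_nonneg _ ha)
    linarith
end

section
/- Let L > 0, c > 0, ε > 0, and ω be such that 0 < ω < 2ε and ω ≤ 2c. Let f : ℝ × ℝ → ℝ be continuous, η : [0,∞) → ℝ be continuous and convex, and define α̂(s) := (π²/L²)(c − ε)·s + L·η(s/L) for s ≥ 0. Let x : [0,L] → ℝ be twice continuously differentiable with x(0) = x(L) = 0, let u : [0,L] → ℝ be continuous, and assume ∫₀^L x''(l) · f(x(l), x'(l)) dl ≥ ∫₀^L η(x'(l)²) dl. Then, writing Z := ∫₀^L x'(l)² dl, it holds that −2∫₀^L x''(l) · ( c·x''(l) + f(x(l), x'(l)) +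 u(l) ) dl ≤ 2(ω/2 − ε)(π²/L²)·Z − 2·α̂(Z) + (1/ω)·∫₀^L u(l)² dl. -/
open Real MeasureTheory intervalIntegral Set

-- helper 1: cot bound
lemma cot_le_inv {t : ℝ} (h1 : 0 < t) (h2 : t < π) : Real.cos t / Real.sin t ≤ 1 / t := by
  have hs : 0 < Real.sin t := Real.sin_pos_of_pos_of_lt_pi h1 h2
  rw [div_le_div_iff₀ hs h1]
  rcases le_or_gt (Real.cos t) 0 with h | h
  · nlinarith
  · have ht2 : t < π/2 := by
      by_contra hh
      exact absurd (Real.cos_nonpos_of_pi_div_two_le_of_le (not_lt.mp hh) (by linarith)) (not_le.mpr h)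
    have := Real.lt_tan h1 ht2
    rw [Real.tan_eq_sin_div_cos, lt_div_iff₀ (Real.cos_pos_of_mem_Ioo ⟨by linarith, ht2⟩)] at this
    linarith

lemma wirtinger {L : ℝ} (hL : 0 < L) (x G : ℝ → ℝ)
    (hxc : ContinuousOn x (Icc 0 L)) (hGc : ContinuousOn G (Icc 0 L))
    (hd : ∀ l ∈ Ioo 0 L, HasDerivAt x (G l) l)
    (hx0 : x 0 = 0) (hxL : x L = 0) :
    π ^ 2 / L ^ 2 * ∫ l in (0:ℝ)..L, (x l) ^ 2 ≤ ∫ l in (0:ℝ)..L, (G l) ^ 2 := by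
  set k : ℝ := π / L with hk_def
  have hk : 0 < k := div_pos Real.pi_pos hL
  have hkL : k * L = π := by rw [hk_def]; field_simp
  -- bound on G
  obtain ⟨M, hM⟩ := isCompact_Icc.exists_bound_of_continuousOn hGc
  have hM0 : 0 ≤ M := le_trans (norm_nonneg _) (hM 0 ⟨le_refl _, hL.le⟩)
  -- FTC primitive: x a = ∫_0^a G for a ∈ Icc
  have hftc : ∀ a ∈ Icc (0:ℝ) L, ∀ b ∈ Icc (0:ℝ) L, a ≤ b →
      (∫ l in a..b, G l) = x b - x a := by
    intro a ha b hb hab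
    apply intervalIntegral.integral_eq_sub_of_hasDeriv_right_of_le hab
      (hxc.mono (Icc_subset_Icc ha.1 hb.2))
    · intro l hl
      exact (hd l ⟨lt_of_le_of_lt ha.1 hl.1, lt_of_lt_of_le hl.2 hb.2⟩).hasDerivWithinAt
    · exact ((hGc.mono (Icc_subset_Icc ha.1 hb.2)).mono (by rw [uIcc_of_le hab])).intervalIntegrable
  have hxle : ∀ a ∈ Icc (0:ℝ) L, |x a| ≤ M * a ∧ |x a| ≤ M * (L - a) := by
    intro a ha
    constructor
    · have h1 : (∫ l in (0:ℝ)..a, G l) = x a := by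
        rw [hftc 0 ⟨le_refl _, hL.le⟩ a ha ha.1, hx0, sub_zero]
      calc |x a| = ‖∫ l in (0:ℝ)..a, G l‖ := by rw [h1]; rfl
        _ ≤ M * |a - 0| := intervalIntegral.norm_integral_le_of_norm_le_const
            (fun l hl => hM l (Icc_subset_Icc_right ha.2
              (mem_Icc_of_Ioc (by rwa [uIoc_of_le ha.1] at hl))))
        _ = M * a := by rw [sub_zero, abs_of_nonneg ha.1]
    · have h1 : (∫ l in a..L, G l) = - x a := by
        rw [hftc a ha L ⟨hL.le, le_refl _⟩ ha.2, hxL, zero_sub]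
      have : |x a| = ‖∫ l in a..L, G l‖ := by rw [h1, norm_neg]; rfl
      rw [this]
      calc ‖∫ l in a..L, G l‖ ≤ M * |L - a| := intervalIntegral.norm_integral_le_of_norm_le_const
            (fun l hl => hM l (Icc_subset_Icc_left ha.1
              (mem_Icc_of_Ioc (by rwa [uIoc_of_le ha.2] at hl))))
        _ = M * (L - a) := by rw [abs_of_nonneg (by linarith [ha.2])]
  -- the integrand
  set ψ : ℝ → ℝ := fun l => (G l) ^ 2 - k ^ 2 * (x l) ^ 2 with hψ_def
  have hψc : ContinuousOn ψ (Icc 0 L) := (hGc.pow 2).sub (continuousOn_const.mul (hxc.pow 2))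
  obtain ⟨C, hC⟩ := isCompact_Icc.exists_bound_of_continuousOn hψc
  have hC0 : 0 ≤ C := le_trans (norm_nonneg _) (hC 0 ⟨le_refl _, hL.le⟩)
  -- key estimate for each small t
  have key : ∀ t, 0 < t → t < L / 2 → -((2 * C + 2 * M ^ 2) * t) ≤ ∫ l in (0:ℝ)..L, ψ l := by
    intro t ht htL
    set a : ℝ := t with ha_def
    set b : ℝ := L - t with hb_def
    have hab : a ≤ b := by simp [ha_def, hb_def]; linarith
    have haI : a ∈ Icc (0:ℝ) L := ⟨ht.le, by linarith⟩
    have hbI : b ∈ Icc (0:ℝ) L := ⟨by simp [hb_def]; linarith, by simp [hb_def]; linarith⟩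
    have hsin : ∀ l ∈ Icc a b, 0 < Real.sin (k * l) := by
      intro l hl
      apply Real.sin_pos_of_pos_of_lt_pi
      · exact mul_pos hk (lt_of_lt_of_le ht hl.1)
      · rw [← hkL]
        exact mul_lt_mul_of_pos_left (lt_of_le_of_lt hl.2 (by simp [hb_def]; linarith)) hk
    -- φ and its derivative
    set φ : ℝ → ℝ := fun l => k * (x l) ^ 2 * (Real.cos (k * l) / Real.sin (k * l)) with hφ_def
    set D : ℝ → ℝ := fun l => 2 * k * x l * G l * (Real.cos (k * l) / Real.sin (k * l))
        - k ^ 2 * (x l) ^ 2 * (1 + (Real.cos (k * l) / Real.sin (k * l)) ^ 2) with hD_def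
    have hder : ∀ l ∈ uIcc a b, HasDerivAt φ (D l) l := by
      intro l hl
      rw [uIcc_of_le hab] at hl
      have hs := hsin l hl
      have hlo : l ∈ Ioo (0:ℝ) L := ⟨lt_of_lt_of_le ht hl.1, lt_of_le_of_lt hl.2 (by simp [hb_def]; linarith)⟩
      have hkl : HasDerivAt (fun l : ℝ => k * l) k l := by
        simpa using (hasDerivAt_id l).const_mul k
      have hcos : HasDerivAt (fun l : ℝ => Real.cos (k * l)) (-Real.sin (k * l) * k) l :=
        (Real.hasDerivAt_cos (k * l)).comp l hkl
      have hsin' : HasDerivAt (fun l : ℝ => Real.sin (k * l)) (Real.cos (k * l) * k) l :=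
        (Real.hasDerivAt_sin (k * l)).comp l hkl
      have hquot : HasDerivAt (fun l : ℝ => Real.cos (k * l) / Real.sin (k * l))
          ((-Real.sin (k * l) * k * Real.sin (k * l) - Real.cos (k * l) * (Real.cos (k * l) * k))
            / (Real.sin (k * l)) ^ 2) l := hcos.div hsin' (ne_of_gt hs)
      have hx2 : HasDerivAt (fun l : ℝ => k * (x l) ^ 2) (k * (2 * x l * G l)) l := by
        exact (((hd l hlo).pow 2).const_mul k).congr_deriv (by ring)
      have h1 : Real.sin (k * l) ^ 2 + Real.cos (k * l) ^ 2 = 1 := Real.sin_sq_add_cos_sq _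
      have hdiv : (-Real.sin (k * l) * k * Real.sin (k * l)
            - Real.cos (k * l) * (Real.cos (k * l) * k)) / (Real.sin (k * l)) ^ 2
          = -k * (1 + (Real.cos (k * l) / Real.sin (k * l)) ^ 2) := by
        field_simp
        ring
      rw [hdiv] at hquot
      have := hx2.mul hquot
      exact this.congr_deriv (by simp only [hD_def]; ring)
    -- continuity of D on [a,b]
    have hcont_cot : ContinuousOn (fun l => Real.cos (k * l) / Real.sin (k * l)) (Icc a b) := by
      apply ContinuousOn.div
      · exact (Real.continuous_cos.comp (continuous_const.mul continuous_id)).continuousOn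
      · exact (Real.continuous_sin.comp (continuous_const.mul continuous_id)).continuousOn
      · intro l hl; exact ne_of_gt (hsin l hl)
    have hsub : Icc a b ⊆ Icc 0 L := Icc_subset_Icc haI.1 hbI.2
    have hDc : ContinuousOn D (Icc a b) := by
      apply ContinuousOn.sub
      · exact ((continuousOn_const.mul (hxc.mono hsub)).mul (hGc.mono hsub)).mul hcont_cot
      · exact (continuousOn_const.mul ((hxc.mono hsub).pow 2)).mul
          (continuousOn_const.add (hcont_cot.pow 2))
    have hDi : IntervalIntegrable D volume a b :=
      (hDc.mono (by rw [uIcc_of_le hab])).intervalIntegrable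
    have hftcD : ∫ l in a..b, D l = φ b - φ a :=
      intervalIntegral.integral_eq_sub_of_hasDerivAt hder hDi
    -- pointwise ψ ≥ D on [a,b]
    have hpt : ∀ l ∈ Icc a b, D l ≤ ψ l := by
      intro l hl
      have hs := hsin l hl
      have h1 : Real.sin (k * l) ^ 2 + Real.cos (k * l) ^ 2 = 1 := Real.sin_sq_add_cos_sq _
      have hid : ψ l - D l = (G l - k * x l * (Real.cos (k * l) / Real.sin (k * l))) ^ 2 := by
        simp only [hψ_def, hD_def]
        ring
      have h0 : 0 ≤ ψ l - D l := hid ▸ sq_nonneg _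
      linarith
    have hψi : ∀ p q : ℝ, p ∈ Icc (0:ℝ) L → q ∈ Icc (0:ℝ) L →
        IntervalIntegrable ψ volume p q := by
      intro p q hp hq
      exact (hψc.mono (uIcc_subset_Icc hp hq)).intervalIntegrable
    have hmono : ∫ l in a..b, D l ≤ ∫ l in a..b, ψ l :=
      intervalIntegral.integral_mono_on hab hDi (hψi a b haI hbI) hpt
    -- bounds on φ a and φ b
    have hka : 0 < k * a := mul_pos hk ht
    have hkaπ : k * a < π := by
      rw [← hkL]; exact mul_lt_mul_of_pos_left (by linarith) hk
    have hφa : φ a ≤ M ^ 2 * t := by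
      have hcot := cot_le_inv hka hkaπ
      have h2 : φ a ≤ k * (x a) ^ 2 * (1 / (k * a)) := by
        apply mul_le_mul_of_nonneg_left hcot (by positivity)
      have h3 : k * (x a) ^ 2 * (1 / (k * a)) = (x a) ^ 2 / a := by
        field_simp
      have h4 : (x a) ^ 2 ≤ (M * a) ^ 2 := by
        have := (hxle a haI).1
        nlinarith [abs_nonneg (x a), sq_abs (x a)]
      rw [h3] at h2
      calc φ a ≤ (x a) ^ 2 / a := h2
        _ ≤ (M * a) ^ 2 / a := div_le_div_of_nonneg_right h4 ht.le
        _ = M ^ 2 * t := by field_simp [ha_def]; ring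
    have hφb : -(M ^ 2 * t) ≤ φ b := by
      have hkt : 0 < k * t := mul_pos hk ht
      have hktπ : k * t < π := by
        rw [← hkL]; exact mul_lt_mul_of_pos_left (by linarith) hk
      have hkb : k * b = π - k * t := by rw [hb_def, mul_sub, hkL]
      have hcot := cot_le_inv hkt hktπ
      have hφbeq : φ b = k * (x b) ^ 2 * (-(Real.cos (k * t) / Real.sin (k * t))) := by
        simp only [hφ_def, hkb, Real.cos_pi_sub, Real.sin_pi_sub]
        ring
      have h2 : k * (x b) ^ 2 * (-(1 / (k * t))) ≤ φ b := by
        rw [hφbeq]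
        apply mul_le_mul_of_nonneg_left (by linarith) (by positivity)
      have h3 : k * (x b) ^ 2 * (-(1 / (k * t))) = -((x b) ^ 2 / t) := by
        field_simp
      have h4 : (x b) ^ 2 ≤ (M * t) ^ 2 := by
        have h5 := (hxle b hbI).2
        have h6 : L - b = t := by rw [hb_def]; ring
        rw [h6] at h5
        nlinarith [abs_nonneg (x b), sq_abs (x b)]
      have h7 : -((M * t) ^ 2 / t) ≤ -((x b) ^ 2 / t) :=
        neg_le_neg (div_le_div_of_nonneg_right h4 ht.le)
      have h8 : -((M * t) ^ 2 / t) = -(M ^ 2 * t) := by field_simp [ha_def]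
      linarith [h2, h3 ▸ h2]
    have hmid : -(2 * M ^ 2 * t) ≤ ∫ l in a..b, ψ l := by
      linarith [hmono, hftcD ▸ hmono]
    -- split the integral
    have h0I : (0:ℝ) ∈ Icc (0:ℝ) L := ⟨le_refl _, hL.le⟩
    have hLI : L ∈ Icc (0:ℝ) L := ⟨hL.le, le_refl _⟩
    have e2 : (∫ l in a..b, ψ l) + ∫ l in b..L, ψ l = ∫ l in a..L, ψ l :=
      intervalIntegral.integral_add_adjacent_intervals (hψi a b haI hbI) (hψi b L hbI hLI)
    have e1 : (∫ l in (0:ℝ)..a, ψ l) + ∫ l in a..L, ψ l = ∫ l in (0:ℝ)..L, ψ l :=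
      intervalIntegral.integral_add_adjacent_intervals (hψi 0 a h0I haI) (hψi a L haI hLI)
    have hb1 : ‖∫ l in (0:ℝ)..a, ψ l‖ ≤ C * |a - 0| :=
      intervalIntegral.norm_integral_le_of_norm_le_const (fun l hl => hC l
        (Icc_subset_Icc_right haI.2 (mem_Icc_of_Ioc (by rwa [uIoc_of_le haI.1] at hl))))
    have hb2 : ‖∫ l in b..L, ψ l‖ ≤ C * |L - b| :=
      intervalIntegral.norm_integral_le_of_norm_le_const (fun l hl => hC l
        (Icc_subset_Icc_left hbI.1 (mem_Icc_of_Ioc (by rwa [uIoc_of_le hbI.2] at hl))))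
    have hab1 : |a - 0| = t := by rw [sub_zero]; exact abs_of_pos ht
    have hab2 : |L - b| = t := by rw [hb_def, sub_sub_cancel]; exact abs_of_pos ht
    rw [hab1] at hb1; rw [hab2] at hb2
    have hb1' := (abs_le.mp hb1).1
    have hb2' := (abs_le.mp hb2).1
    linarith
  -- conclude nonnegativity
  have h0 : 0 ≤ ∫ l in (0:ℝ)..L, ψ l := by
    by_contra hcon
    push_neg at hcon
    set I := ∫ l in (0:ℝ)..L, ψ l with hI_def
    set D0 : ℝ := 2 * C + 2 * M ^ 2 + 1 with hD0_def
    have hD0 : 0 < D0 := by positivity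
    set t0 : ℝ := min (L / 4) (-I / (2 * D0)) with ht0_def
    have ht0a : 0 < t0 := lt_min (by linarith) (div_pos (by linarith) (by linarith))
    have ht0b : t0 < L / 2 := lt_of_le_of_lt (min_le_left _ _) (by linarith)
    have hkey := key t0 ht0a ht0b
    have h1 : (2 * C + 2 * M ^ 2) * t0 ≤ D0 * t0 := by nlinarith
    have h2 : D0 * t0 ≤ D0 * (-I / (2 * D0)) :=
      mul_le_mul_of_nonneg_left (min_le_right _ _) hD0.le
    have h3 : D0 * (-I / (2 * D0)) = -I / 2 := by field_simp
    linarith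
  -- rewrite ψ integral
  have hGint : IntervalIntegrable (fun l => (G l) ^ 2) volume 0 L :=
    ((hGc.pow 2).mono (by rw [uIcc_of_le hL.le])).intervalIntegrable
  have hxint : IntervalIntegrable (fun l => k ^ 2 * (x l) ^ 2) volume 0 L :=
    ((continuousOn_const.mul (hxc.pow 2)).mono (by rw [uIcc_of_le hL.le])).intervalIntegrable
  have hsplit : (∫ l in (0:ℝ)..L, ψ l)
      = (∫ l in (0:ℝ)..L, (G l) ^ 2) - ∫ l in (0:ℝ)..L, k ^ 2 * (x l) ^ 2 := by
    simp only [hψ_def]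
    exact intervalIntegral.integral_sub hGint hxint
  have hconst : (∫ l in (0:ℝ)..L, k ^ 2 * (x l) ^ 2) = k ^ 2 * ∫ l in (0:ℝ)..L, (x l) ^ 2 :=
    intervalIntegral.integral_const_mul _ _
  have hk2 : k ^ 2 = π ^ 2 / L ^ 2 := by rw [hk_def, div_pow]
  rw [hsplit, hconst, hk2] at h0
  linarith

lemma cs_interval {L : ℝ} (hL : 0 < L) (p q : ℝ → ℝ)
    (hp : ContinuousOn p (Icc 0 L)) (hq : ContinuousOn q (Icc 0 L)) :
    (∫ l in (0:ℝ)..L, p l * q l) ^ 2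
      ≤ (∫ l in (0:ℝ)..L, (p l) ^ 2) * ∫ l in (0:ℝ)..L, (q l) ^ 2 := by
  have hu : uIcc (0:ℝ) L ⊆ Icc (0:ℝ) L := by rw [uIcc_of_le hL.le]
  have hp2 : IntervalIntegrable (fun l => (p l) ^ 2) volume 0 L :=
    ((hp.pow 2).mono hu).intervalIntegrable
  have hq2 : IntervalIntegrable (fun l => (q l) ^ 2) volume 0 L :=
    ((hq.pow 2).mono hu).intervalIntegrable
  have hpq : IntervalIntegrable (fun l => p l * q l) volume 0 L :=
    ((hp.mul hq).mono hu).intervalIntegrable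
  have key : ∀ r : ℝ, 0 ≤ (∫ l in (0:ℝ)..L, (q l) ^ 2) * (r * r)
      + (2 * ∫ l in (0:ℝ)..L, p l * q l) * r + ∫ l in (0:ℝ)..L, (p l) ^ 2 := by
    intro r
    have hnn : 0 ≤ ∫ l in (0:ℝ)..L, (p l + r * q l) ^ 2 :=
      intervalIntegral.integral_nonneg hL.le (fun u _ => sq_nonneg _)
    have hexp : (∫ l in (0:ℝ)..L, (p l + r * q l) ^ 2)
        = (∫ l in (0:ℝ)..L, (p l) ^ 2) + ((2 * ∫ l in (0:ℝ)..L, p l * q l) * r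
          + (∫ l in (0:ℝ)..L, (q l) ^ 2) * r ^ 2) := by
      have h1 : (fun l => (p l + r * q l) ^ 2)
          = fun l => (p l) ^ 2 + ((2 * r) * (p l * q l) + r ^ 2 * (q l) ^ 2) := by
        funext l; ring
      rw [h1, intervalIntegral.integral_add hp2 (((hpq.const_mul (2*r))).add
        (hq2.const_mul (r^2))), intervalIntegral.integral_add (hpq.const_mul (2*r))
        (hq2.const_mul (r^2)), intervalIntegral.integral_const_mul,
        intervalIntegral.integral_const_mul]
      ring
    rw [hexp] at hnn
    nlinarith [hnn]
  have hd := discrim_le_zero key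
  rw [discrim] at hd
  nlinarith [hd]

lemma byparts {L : ℝ} (hL : 0 < L) (x G H : ℝ → ℝ)
    (hxc : ContinuousOn x (Icc 0 L)) (hGc : ContinuousOn G (Icc 0 L))
    (hHc : ContinuousOn H (Icc 0 L))
    (hd1 : ∀ l ∈ Ioo 0 L, HasDerivAt x (G l) l)
    (hd2 : ∀ l ∈ Ioo 0 L, HasDerivAt G (H l) l)
    (hx0 : x 0 = 0) (hxL : x L = 0) :
    (∫ l in (0:ℝ)..L, (G l) ^ 2) = - ∫ l in (0:ℝ)..L, x l * H l := by
  have hu : uIcc (0:ℝ) L ⊆ Icc (0:ℝ) L := by rw [uIcc_of_le hL.le]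
  have hG2 : IntervalIntegrable (fun l => (G l) ^ 2) volume 0 L :=
    ((hGc.pow 2).mono hu).intervalIntegrable
  have hxH : IntervalIntegrable (fun l => x l * H l) volume 0 L :=
    ((hxc.mul hHc).mono hu).intervalIntegrable
  have hftc : (∫ l in (0:ℝ)..L, ((G l) ^ 2 + x l * H l)) = x L * G L - x 0 * G 0 := by
    apply intervalIntegral.integral_eq_sub_of_hasDeriv_right_of_le hL.le
      (hxc.mul hGc)
    · intro l hl
      have h := ((hd1 l hl).mul (hd2 l hl)).hasDerivWithinAt (s := Ioi l)
      convert h using 1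
      ring
    · exact hG2.add hxH
  rw [intervalIntegral.integral_add hG2 hxH, hx0, hxL] at hftc
  linarith [hftc]


/-- Core dissipation estimate (23) in the proof of Item 1 of Theorem 3.1 of the
paper for `q = 1`.  Here `α̂(s) = (π²/L²)(c−ε)s + L·η(s/L)` and
`Z = ∫₀^L (x')² dl`. -/
theorem dissipation_estimate_23 (L c ε ω : ℝ) (hL : 0 < L) (hc : 0 < c) (hε : 0 < ε)
    (hω : 0 < ω) (hωε : ω < 2 * ε) (hωc : ω ≤ 2 * c)
    (f : ℝ × ℝ → ℝ) (hf : Continuous f)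
    (η : ℝ → ℝ) (hη : ContinuousOn η (Set.Ici 0))
    (hηconv : ConvexOn ℝ (Set.Ici 0) η)
    (αhat : ℝ → ℝ)
    (hαhat : ∀ s : ℝ, 0 ≤ s → αhat s = Real.pi ^ 2 / L ^ 2 * (c - ε) * s + L * η (s / L))
    (x : ℝ → ℝ) (hx : ContDiffOn ℝ 2 x (Set.Icc 0 L))
    (hx0 : x 0 = 0) (hxL : x L = 0)
    (u : ℝ → ℝ) (hu : ContinuousOn u (Set.Icc 0 L))
    (hyp : ∫ l in (0:ℝ)..L, deriv (deriv x) l * f (x l, deriv x l)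
            ≥ ∫ l in (0:ℝ)..L, η ((deriv x l) ^ 2)) :
    -2 * ∫ l in (0:ℝ)..L, deriv (deriv x) l *
        (c * deriv (deriv x) l + f (x l, deriv x l) + u l)
      ≤ 2 * (ω/2 - ε) * (Real.pi ^ 2 / L ^ 2) * (∫ l in (0:ℝ)..L, (deriv x l) ^ 2)
        - 2 * αhat (∫ l in (0:ℝ)..L, (deriv x l) ^ 2)
        + (1/ω) * ∫ l in (0:ℝ)..L, (u l) ^ 2 := by
  have hud : UniqueDiffOn ℝ (Icc (0:ℝ) L) := uniqueDiffOn_Icc hL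
  set G : ℝ → ℝ := derivWithin x (Icc 0 L) with hG_def
  set H : ℝ → ℝ := derivWithin G (Icc 0 L) with hH_def
  have hxc : ContinuousOn x (Icc 0 L) := hx.continuousOn
  have hG1 : ContDiffOn ℝ 1 G (Icc 0 L) := hx.derivWithin hud (by norm_num)
  have hGc : ContinuousOn G (Icc 0 L) := hG1.continuousOn
  have hHc : ContinuousOn H (Icc 0 L) := hG1.continuousOn_derivWithin hud (le_refl _)
  have hmem : ∀ l ∈ Ioo (0:ℝ) L, Icc (0:ℝ) L ∈ nhds l := fun l hl => Icc_mem_nhds hl.1 hl.2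
  have hEG : ∀ l ∈ Ioo (0:ℝ) L, deriv x l = G l :=
    fun l hl => (derivWithin_of_mem_nhds (hmem l hl)).symm
  have hdx : ∀ l ∈ Ioo (0:ℝ) L, HasDerivAt x (G l) l := by
    intro l hl
    have hdiff := (hx.differentiableOn (by norm_num)).differentiableAt (hmem l hl)
    have h1 := hdiff.hasDerivAt
    rwa [hEG l hl] at h1
  have hEH' : ∀ l ∈ Ioo (0:ℝ) L, deriv G l = H l := by
    intro l hl
    rw [hH_def]
    exact (derivWithin_of_mem_nhds (hmem l hl)).symm
  have hdG : ∀ l ∈ Ioo (0:ℝ) L, HasDerivAt G (H l) l := by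
    intro l hl
    have hdiff := (hG1.differentiableOn (by norm_num)).differentiableAt (hmem l hl)
    have h1 := hdiff.hasDerivAt
    rwa [hEH' l hl] at h1
  have hEH : ∀ l ∈ Ioo (0:ℝ) L, deriv (deriv x) l = H l := by
    intro l hl
    have heq : deriv x =ᶠ[nhds l] G :=
      Filter.eventually_of_mem (isOpen_Ioo.mem_nhds hl) (fun y hy => hEG y hy)
    rw [heq.deriv_eq]
    exact hEH' l hl
  -- congruence of interval integrals
  have hcongr : ∀ F1 F2 : ℝ → ℝ, (∀ l ∈ Ioo (0:ℝ) L, F1 l = F2 l) →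
      (∫ l in (0:ℝ)..L, F1 l) = ∫ l in (0:ℝ)..L, F2 l := by
    intro F1 F2 h
    apply intervalIntegral.integral_congr_ae
    have hLn : ∀ᵐ l : ℝ, l ∉ ({L} : Set ℝ) :=
      MeasureTheory.measure_eq_zero_iff_ae_notMem.mp (by simp)
    filter_upwards [hLn] with l hl hmem'
    rw [uIoc_of_le hL.le] at hmem'
    exact h l ⟨hmem'.1, lt_of_le_of_ne hmem'.2 (fun he => hl (by simp [he]))⟩
  -- rewrite all integrals in terms of G, H
  have hI1 : (∫ l in (0:ℝ)..L, deriv (deriv x) l *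
        (c * deriv (deriv x) l + f (x l, deriv x l) + u l))
      = ∫ l in (0:ℝ)..L, H l * (c * H l + f (x l, G l) + u l) :=
    hcongr _ _ (fun l hl => by rw [hEH l hl, hEG l hl])
  have hI2 : (∫ l in (0:ℝ)..L, (deriv x l) ^ 2) = ∫ l in (0:ℝ)..L, (G l) ^ 2 :=
    hcongr _ _ (fun l hl => by rw [hEG l hl])
  have hyp1 : (∫ l in (0:ℝ)..L, deriv (deriv x) l * f (x l, deriv x l))
      = ∫ l in (0:ℝ)..L, H l * f (x l, G l) :=
    hcongr _ _ (fun l hl => by rw [hEH l hl, hEG l hl])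
  have hyp2 : (∫ l in (0:ℝ)..L, η ((deriv x l) ^ 2)) = ∫ l in (0:ℝ)..L, η ((G l) ^ 2) :=
    hcongr _ _ (fun l hl => by rw [hEG l hl])
  rw [hI1, hI2]
  rw [hyp1, hyp2] at hyp
  set Z : ℝ := ∫ l in (0:ℝ)..L, (G l) ^ 2 with hZ_def
  set I2 : ℝ := ∫ l in (0:ℝ)..L, (H l) ^ 2 with hI2_def
  have hZnn : 0 ≤ Z := intervalIntegral.integral_nonneg hL.le (fun l _ => sq_nonneg _)
  have hI2nn : 0 ≤ I2 := intervalIntegral.integral_nonneg hL.le (fun l _ => sq_nonneg _)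
  -- Wirtinger + by parts + Cauchy-Schwarz:  π²/L² Z ≤ I2
  have hkey : π ^ 2 / L ^ 2 * Z ≤ I2 := by
    have hbp : Z = - ∫ l in (0:ℝ)..L, x l * H l :=
      byparts hL x G H hxc hGc hHc hdx hdG hx0 hxL
    have hcs := cs_interval hL x H hxc hHc
    have hw := wirtinger hL x G hxc hGc hdx hx0 hxL
    have hP : 0 < π ^ 2 / L ^ 2 := by positivity
    have hXnn : 0 ≤ ∫ l in (0:ℝ)..L, (x l) ^ 2 :=
      intervalIntegral.integral_nonneg hL.le (fun l _ => sq_nonneg _)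
    rcases eq_or_lt_of_le hZnn with h | h
    · rw [← h, mul_zero]; exact hI2nn
    · have h1 : Z ^ 2 ≤ (∫ l in (0:ℝ)..L, (x l) ^ 2) * I2 := by
        rw [hbp, neg_pow]
        simpa using hcs
      have h2 : (π ^ 2 / L ^ 2) * ((∫ l in (0:ℝ)..L, (x l) ^ 2) * I2)
          ≤ Z * I2 := by
        have := mul_le_mul_of_nonneg_right hw hI2nn
        linarith [this]
      have h3 : (π ^ 2 / L ^ 2) * Z ^ 2 ≤ Z * I2 :=
        le_trans (mul_le_mul_of_nonneg_left h1 hP.le) h2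
      have h4 : (π ^ 2 / L ^ 2 * Z) * Z ≤ I2 * Z := by nlinarith
      exact le_of_mul_le_mul_right h4 h
  -- integrability facts
  have hu' : uIcc (0:ℝ) L ⊆ Icc (0:ℝ) L := by rw [uIcc_of_le hL.le]
  have hFc : ContinuousOn (fun l => f (x l, G l)) (Icc 0 L) :=
    hf.comp_continuousOn (hxc.prodMk hGc)
  have hH2i : IntervalIntegrable (fun l => (H l) ^ 2) volume 0 L :=
    ((hHc.pow 2).mono hu').intervalIntegrable
  have hHFi : IntervalIntegrable (fun l => H l * f (x l, G l)) volume 0 L :=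
    ((hHc.mul hFc).mono hu').intervalIntegrable
  have hHui : IntervalIntegrable (fun l => H l * u l) volume 0 L :=
    ((hHc.mul hu).mono hu').intervalIntegrable
  have hu2i : IntervalIntegrable (fun l => (u l) ^ 2) volume 0 L :=
    ((hu.pow 2).mono hu').intervalIntegrable
  -- split LHS integral
  have hsplit : (∫ l in (0:ℝ)..L, H l * (c * H l + f (x l, G l) + u l))
      = c * I2 + (∫ l in (0:ℝ)..L, H l * f (x l, G l))
        + ∫ l in (0:ℝ)..L, H l * u l := by
    have h1 : (fun l => H l * (c * H l + f (x l, G l) + u l))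
        = fun l => c * (H l) ^ 2 + (H l * f (x l, G l) + H l * u l) := by
      funext l; ring
    rw [h1, intervalIntegral.integral_add (hH2i.const_mul c) (hHFi.add hHui),
      intervalIntegral.integral_add hHFi hHui, intervalIntegral.integral_const_mul]
    ring
  -- Young's inequality
  have hyoung : -2 * (∫ l in (0:ℝ)..L, H l * u l)
      ≤ ω * I2 + (1/ω) * ∫ l in (0:ℝ)..L, (u l) ^ 2 := by
    have hωinv : ω * (1/ω) = 1 := by field_simp
    have hpt : ∀ l ∈ Icc (0:ℝ) L,
        0 ≤ ω * (H l) ^ 2 + (1/ω) * (u l) ^ 2 + 2 * (H l * u l) := by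
      intro l _
      nlinarith [sq_nonneg (ω * H l + u l), hω, hωinv]
    have hnn : 0 ≤ ∫ l in (0:ℝ)..L,
        (ω * (H l) ^ 2 + (1/ω) * (u l) ^ 2 + 2 * (H l * u l)) :=
      intervalIntegral.integral_nonneg hL.le (fun l hl => hpt l hl)
    rw [intervalIntegral.integral_add ((hH2i.const_mul ω).add (hu2i.const_mul (1/ω)))
        (hHui.const_mul 2), intervalIntegral.integral_add (hH2i.const_mul ω)
        (hu2i.const_mul (1/ω)), intervalIntegral.integral_const_mul,
        intervalIntegral.integral_const_mul, intervalIntegral.integral_const_mul] at hnn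
    linarith
  -- Jensen's inequality
  have hjensen : L * η (Z / L) ≤ ∫ l in (0:ℝ)..L, η ((G l) ^ 2) := by
    set μ : Measure ℝ := volume.restrict (Ioc 0 L) with hμ_def
    have hμuniv : μ Set.univ = ENNReal.ofReal L := by
      rw [hμ_def, Measure.restrict_apply_univ, Real.volume_Ioc, sub_zero]
    haveI : IsFiniteMeasure μ := ⟨by rw [hμuniv]; exact ENNReal.ofReal_lt_top⟩
    haveI : NeZero μ := ⟨MeasureTheory.Measure.measure_univ_ne_zero.mp (by
      rw [hμuniv]
      simp only [ne_eq, ENNReal.ofReal_eq_zero, not_le]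
      linarith)⟩
    have hG2int : Integrable (fun l => (G l) ^ 2) μ :=
      ((hGc.pow 2).integrableOn_Icc).mono_set Ioc_subset_Icc_self
    have hηGc : ContinuousOn (fun l => η ((G l) ^ 2)) (Icc 0 L) :=
      hη.comp (hGc.pow 2) (fun l _ => mem_Ici.mpr (sq_nonneg _))
    have hηGint : Integrable ((fun s => η s) ∘ (fun l => (G l) ^ 2)) μ :=
      (hηGc.integrableOn_Icc).mono_set Ioc_subset_Icc_self
    have hmemae : ∀ᵐ l ∂μ, (G l) ^ 2 ∈ Ici (0:ℝ) :=
      Filter.Eventually.of_forall (fun l => mem_Ici.mpr (sq_nonneg _))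
    have hjen := hηconv.map_average_le hη isClosed_Ici hmemae hG2int hηGint
    have havg : ∀ g : ℝ → ℝ, (⨍ l, g l ∂μ) = (1 / L) * ∫ l in (0:ℝ)..L, g l := by
      intro g
      rw [average_eq, measureReal_def, hμuniv, ENNReal.toReal_ofReal hL.le, smul_eq_mul,
        intervalIntegral.integral_of_le hL.le, one_div]
    rw [havg, havg] at hjen
    have hLpos : (0:ℝ) < 1 / L := by positivity
    have h2 : η (Z / L) ≤ (1 / L) * ∫ l in (0:ℝ)..L, η ((G l) ^ 2) := by
      have : (1 / L) * Z = Z / L := by ring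
      rw [← this]
      exact hjen
    have h3 := mul_le_mul_of_nonneg_left h2 hL.le
    calc L * η (Z / L) ≤ L * ((1 / L) * ∫ l in (0:ℝ)..L, η ((G l) ^ 2)) := h3
      _ = ∫ l in (0:ℝ)..L, η ((G l) ^ 2) := by field_simp
  -- final assembly
  rw [hsplit, hαhat Z hZnn]
  have hmul : (2 * c - ω) * (π ^ 2 / L ^ 2 * Z) ≤ (2 * c - ω) * I2 :=
    mul_le_mul_of_nonneg_left hkey (by linarith)
  linarith [hyp, hjensen, hyoung, hmul]
end

section
/- Let L > 0, c > 0, ε > 0, and ω be such that 0 < ω < 2ε and ω ≤ 2c. Let f : ℝ × ℝ → ℝ be continuous, η : [0,∞) → ℝ be continuous and convex, and define α̂(s) := (π²/L²)(c − ε)·s + L·η(s/L) for s ≥ 0. Let x : [0,L] → ℝ be twice continuously differentiable with x(0) = x(L) = 0, let u : [0,L] → ℝ be continuous, and assume ∫₀^L x''(l) · f(x(l), x'(l)) dl ≥ ∫₀^L η(x'(l)²) dl. Then, writing Z := ∫₀^L x'(l)² dl, it holds that −2∫₀^L x''(l) · ( c·x''(l) + f(x(l), x'(l)) + x'(l)·u(l)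 ) dl ≤ 2(ω/2 − ε)(π²/L²)·Z − 2·α̂(Z) + (Z/ω)·sup_{l∈[0,L]} u(l)². -/
open Real MeasureTheory intervalIntegral Set Filter Topology

lemma poincare_sharp (L : ℝ) (hL : 0 < L) (x g : ℝ → ℝ)
    (hxc : ContinuousOn x (Set.Icc 0 L)) (hgc : ContinuousOn g (Set.Icc 0 L))
    (hd : ∀ l ∈ Set.Ioo 0 L, HasDerivAt x (g l) l)
    (hd0 : HasDerivWithinAt x (g 0) (Set.Icc 0 L) 0)
    (hdL : HasDerivWithinAt x (g L) (Set.Icc 0 L) L)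
    (hx0 : x 0 = 0) (hxL : x L = 0) :
    Real.pi ^ 2 / L ^ 2 * ∫ l in (0:ℝ)..L, (x l) ^ 2 ≤ ∫ l in (0:ℝ)..L, (g l) ^ 2 := by
  obtain ⟨k, hk_def⟩ : ∃ k : ℝ, k = Real.pi / L := ⟨_, rfl⟩
  have hk : 0 < k := hk_def ▸ div_pos Real.pi_pos hL
  have hkL : k * L = Real.pi := by rw [hk_def]; field_simp
  have hsin : ∀ l ∈ Set.Ioo 0 L, 0 < Real.sin (k * l) := by
    intro l hl
    apply Real.sin_pos_of_pos_of_lt_pi (mul_pos hk hl.1)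
    rw [← hkL]; exact mul_lt_mul_of_pos_left hl.2 hk
  have hsinL : Real.sin (k * L) = 0 := by rw [hkL, Real.sin_pi]
  set G : ℝ → ℝ := fun l => k * (Real.cos (k * l) / Real.sin (k * l)) * (x l) ^ 2 with hG_def
  set G' : ℝ → ℝ := fun l =>
      -k ^ 2 / (Real.sin (k * l)) ^ 2 * (x l) ^ 2
        + 2 * k * (Real.cos (k * l) / Real.sin (k * l)) * x l * g l with hG'_def
  set ψ : ℝ → ℝ := fun l => (g l) ^ 2 - k ^ 2 * (x l) ^ 2 with hψ_def
  have hψc : ContinuousOn ψ (Set.Icc 0 L) :=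
    (hgc.pow 2).sub (continuousOn_const.mul (hxc.pow 2))
  have hψint : IntervalIntegrable ψ volume 0 L :=
    (hψc.mono (by rw [Set.uIcc_of_le hL.le])).intervalIntegrable
  -- derivative of G
  have hGd : ∀ l ∈ Set.Ioo 0 L, HasDerivAt G (G' l) l := by
    intro l hl
    have hs := hsin l hl
    have hs' : Real.sin (k * l) ≠ 0 := ne_of_gt hs
    have hi : HasDerivAt (fun t : ℝ => k * t) k l := by
      simpa using (hasDerivAt_id l).const_mul k
    have h1 : HasDerivAt (fun t : ℝ => Real.sin (k * t)) (Real.cos (k * l) * k) l :=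
      (Real.hasDerivAt_sin (k * l)).comp l hi
    have h2 : HasDerivAt (fun t : ℝ => Real.cos (k * t)) (-Real.sin (k * l) * k) l :=
      (Real.hasDerivAt_cos (k * l)).comp l hi
    have h3 : HasDerivAt (fun t : ℝ => Real.cos (k * t) / Real.sin (k * t))
        ((-Real.sin (k * l) * k * Real.sin (k * l)
          - Real.cos (k * l) * (Real.cos (k * l) * k)) / (Real.sin (k * l)) ^ 2) l :=
      h2.div h1 hs'
    have h4 : HasDerivAt (fun t : ℝ => (x t) ^ 2) (2 * x l * g l) l := by
      have := (hd l hl).fun_pow 2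
      simpa [mul_comm, mul_assoc] using this
    have h5 := (h3.const_mul k).mul h4
    convert h5 using 1
    have hpy : Real.sin (k * l) ^ 2 + Real.cos (k * l) ^ 2 = 1 := Real.sin_sq_add_cos_sq _
    show G' l = _
    rw [hG'_def]
    field_simp
    linear_combination (x l ^ 2 * k) * Real.sin_sq_add_cos_sq (k * l)
    all_goals rfl
  -- pointwise inequality G' ≤ ψ
  have hkey : ∀ l ∈ Set.Ioo 0 L, G' l ≤ ψ l := by
    intro l hl
    have hs := hsin l hl
    have hs' : Real.sin (k * l) ≠ 0 := ne_of_gt hs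
    have hpy : Real.sin (k * l) ^ 2 + Real.cos (k * l) ^ 2 = 1 := Real.sin_sq_add_cos_sq _
    have hid : ψ l - G' l = (g l - k * (Real.cos (k * l) / Real.sin (k * l)) * x l) ^ 2 := by
      rw [hψ_def, hG'_def]
      field_simp
      linear_combination (-(k ^ 2 * (x l) ^ 2)) * hpy
    have h2 : 0 ≤ ψ l - G' l := hid ▸ sq_nonneg _
    linarith
  -- FTC on subintervals
  have step : ∀ a ∈ Set.Ioo (0:ℝ) (L/2),
      G (L - a) - G a ≤ (∫ l in (0:ℝ)..(L - a), ψ l) - ∫ l in (0:ℝ)..a, ψ l := by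
    intro a ha
    have hab : a ≤ L - a := by linarith [ha.1, ha.2]
    have hsub : Set.Icc a (L - a) ⊆ Set.Ioo 0 L := fun t ht =>
      ⟨lt_of_lt_of_le ha.1 ht.1, by linarith [ht.2, ha.1]⟩
    have hG'c : ContinuousOn G' (Set.Icc a (L - a)) := by
      have hsne : ∀ t ∈ Set.Icc a (L - a), Real.sin (k * t) ≠ 0 := fun t ht =>
        ne_of_gt (hsin t (hsub ht))
      have hcont_sin : ContinuousOn (fun t : ℝ => Real.sin (k * t)) (Set.Icc a (L - a)) :=
        (Real.continuous_sin.comp (continuous_const.mul continuous_id)).continuousOn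
      have hcont_cos : ContinuousOn (fun t : ℝ => Real.cos (k * t)) (Set.Icc a (L - a)) :=
        (Real.continuous_cos.comp (continuous_const.mul continuous_id)).continuousOn
      have hxc' : ContinuousOn x (Set.Icc a (L - a)) :=
        hxc.mono fun t ht => Set.Ioo_subset_Icc_self (hsub ht)
      have hgc' : ContinuousOn g (Set.Icc a (L - a)) :=
        hgc.mono fun t ht => Set.Ioo_subset_Icc_self (hsub ht)
      exact ((continuousOn_const.div (hcont_sin.pow 2)
          fun t ht => pow_ne_zero 2 (hsne t ht)).mul (hxc'.pow 2)).add
        (((continuousOn_const.mul (hcont_cos.div hcont_sin hsne)).mul hxc').mul hgc')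
    have hG'int : IntervalIntegrable G' volume a (L - a) :=
      (hG'c.mono (by rw [Set.uIcc_of_le hab])).intervalIntegrable
    have hftc : ∫ l in a..(L - a), G' l = G (L - a) - G a := by
      apply intervalIntegral.integral_eq_sub_of_hasDerivAt
      · intro t ht
        rw [Set.uIcc_of_le hab] at ht
        exact hGd t (hsub ht)
      · exact hG'int
    have hsubIcc : Set.Icc a (L - a) ⊆ Set.Icc 0 L :=
      fun t ht => Set.Ioo_subset_Icc_self (hsub ht)
    have hψint' : IntervalIntegrable ψ volume a (L - a) :=
      (hψc.mono (hsubIcc.trans' (by rw [Set.uIcc_of_le hab]))).intervalIntegrable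
    have hmono : ∫ l in a..(L - a), G' l ≤ ∫ l in a..(L - a), ψ l :=
      intervalIntegral.integral_mono_on hab hG'int hψint' fun t ht => hkey t (hsub ht)
    have hψa : IntervalIntegrable ψ volume 0 a := by
      apply ContinuousOn.intervalIntegrable
      apply hψc.mono
      rw [Set.uIcc_of_le ha.1.le]
      exact Set.Icc_subset_Icc le_rfl (by linarith [ha.2])
    have hψb : IntervalIntegrable ψ volume 0 (L - a) := by
      apply ContinuousOn.intervalIntegrable
      apply hψc.mono
      rw [Set.uIcc_of_le (by linarith [ha.1] : (0:ℝ) ≤ L - a)]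
      exact Set.Icc_subset_Icc le_rfl (by linarith [ha.1])
    have hsplit : (∫ l in (0:ℝ)..(L - a), ψ l) - ∫ l in (0:ℝ)..a, ψ l
        = ∫ l in a..(L - a), ψ l :=
      intervalIntegral.integral_interval_sub_left hψb hψa
    rw [hsplit]
    linarith [hftc, hmono]
  -- limits
  have hIooMem : Set.Ioo (0:ℝ) L ∈ 𝓝[>] (0:ℝ) := Ioo_mem_nhdsGT_of_mem ⟨le_refl 0, hL⟩
  have hfil : 𝓝[>] (0:ℝ) ≤ 𝓝[Set.Ioo (0:ℝ) L] 0 := by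
    rw [nhdsWithin_Ioo_eq_nhdsGT hL]
  have hslope0 : Tendsto (fun a => x a / a) (𝓝[>] (0:ℝ)) (𝓝 (g 0)) := by
    have h := hasDerivWithinAt_iff_tendsto_slope.mp hd0
    have h2 : Tendsto (slope x 0) (𝓝[>] (0:ℝ)) (𝓝 (g 0)) :=
      h.mono_left (hfil.trans (nhdsWithin_mono _ (fun t ht => ⟨Set.Ioo_subset_Icc_self ht, ne_of_gt ht.1⟩)))
    refine h2.congr fun a => ?_
    simp [slope_def_field, hx0]
  have hsinslope0 : Tendsto (fun a => Real.sin (k * a) / a) (𝓝[>] (0:ℝ)) (𝓝 k) := by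
    have hi : HasDerivAt (fun t : ℝ => k * t) k 0 := by
      simpa using (hasDerivAt_id (0:ℝ)).const_mul k
    have h1 : HasDerivAt (fun t : ℝ => Real.sin (k * t)) k 0 := by
      have := (Real.hasDerivAt_sin (k * 0)).comp 0 hi
      simpa [Function.comp_def] using this
    have h := hasDerivAt_iff_tendsto_slope.mp h1
    have h2 : Tendsto (slope (fun t => Real.sin (k * t)) 0) (𝓝[>] (0:ℝ)) (𝓝 k) :=
      h.mono_left (nhdsWithin_mono _ fun t ht => ne_of_gt ht)
    refine h2.congr fun a => ?_
    simp [slope_def_field]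
  have hx0' : Tendsto x (𝓝[>] (0:ℝ)) (𝓝 0) := by
    have := (hxc.continuousWithinAt (Set.left_mem_Icc.mpr hL.le))
    rw [ContinuousWithinAt, hx0] at this
    exact this.mono_left (hfil.trans (nhdsWithin_mono _ Set.Ioo_subset_Icc_self))
  have hG0 : Tendsto G (𝓝[>] (0:ℝ)) (𝓝 0) := by
    have hcos : Tendsto (fun a => k * Real.cos (k * a)) (𝓝[>] (0:ℝ)) (𝓝 (k * 1)) := by
      have : Tendsto (fun a : ℝ => k * Real.cos (k * a)) (𝓝 (0:ℝ)) (𝓝 (k * Real.cos (k * 0))) :=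
        (continuous_const.mul (Real.continuous_cos.comp (continuous_const.mul continuous_id))).tendsto 0
      simpa using this.mono_left nhdsWithin_le_nhds
    have hlim : Tendsto (fun a => k * Real.cos (k * a) * ((x a / a) * (Real.sin (k * a) / a)⁻¹ * x a))
        (𝓝[>] (0:ℝ)) (𝓝 (k * 1 * (g 0 * k⁻¹ * 0))) :=
      hcos.mul ((hslope0.mul (hsinslope0.inv₀ (ne_of_gt hk))).mul hx0')
    have hlim0 : (k * 1 * (g 0 * k⁻¹ * 0) : ℝ) = 0 := by ring
    rw [hlim0] at hlim
    refine Tendsto.congr' ?_ hlim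
    filter_upwards [hIooMem] with a ha
    have hs' : Real.sin (k * a) ≠ 0 := ne_of_gt (hsin a ha)
    have ha' : a ≠ 0 := ne_of_gt ha.1
    rw [hG_def]
    field_simp
  have hGLlim : Tendsto G (𝓝[Set.Ioo (0:ℝ) L] L) (𝓝 0) := by
    have hfilL : 𝓝[Set.Ioo (0:ℝ) L] L = 𝓝[<] L := nhdsWithin_Ioo_eq_nhdsLT hL
    have hslopeL : Tendsto (fun b => x b / (b - L)) (𝓝[Set.Ioo (0:ℝ) L] L) (𝓝 (g L)) := by
      have h := hasDerivWithinAt_iff_tendsto_slope.mp hdL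
      have h2 : Tendsto (slope x L) (𝓝[Set.Ioo (0:ℝ) L] L) (𝓝 (g L)) :=
        h.mono_left (nhdsWithin_mono _ fun t ht => ⟨Set.Ioo_subset_Icc_self ht, ne_of_lt ht.2⟩)
      refine h2.congr fun b => ?_
      simp [slope_def_field, hxL]
    have hsinslopeL : Tendsto (fun b => Real.sin (k * b) / (b - L)) (𝓝[Set.Ioo (0:ℝ) L] L)
        (𝓝 (-k)) := by
      have hi : HasDerivAt (fun t : ℝ => k * t) k L := by
        simpa using (hasDerivAt_id L).const_mul k
      have h1 : HasDerivAt (fun t : ℝ => Real.sin (k * t)) (-k) L := by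
        have := (Real.hasDerivAt_sin (k * L)).comp L hi
        rw [hkL] at this
        simpa [Function.comp_def] using this
      have h := hasDerivAt_iff_tendsto_slope.mp h1
      have h2 : Tendsto (slope (fun t => Real.sin (k * t)) L) (𝓝[Set.Ioo (0:ℝ) L] L) (𝓝 (-k)) :=
        h.mono_left (nhdsWithin_mono _ fun t ht => ne_of_lt ht.2)
      refine h2.congr fun b => ?_
      simp [slope_def_field, hsinL]
    have hxL' : Tendsto x (𝓝[Set.Ioo (0:ℝ) L] L) (𝓝 0) := by
      have := hxc.continuousWithinAt (Set.right_mem_Icc.mpr hL.le)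
      rw [ContinuousWithinAt, hxL] at this
      exact this.mono_left (nhdsWithin_mono _ Set.Ioo_subset_Icc_self)
    have hcos : Tendsto (fun b => k * Real.cos (k * b)) (𝓝[Set.Ioo (0:ℝ) L] L)
        (𝓝 (k * Real.cos (k * L))) := by
      exact ((continuous_const.mul (Real.continuous_cos.comp
        (continuous_const.mul continuous_id))).tendsto L).mono_left nhdsWithin_le_nhds
    have hlim : Tendsto (fun b => k * Real.cos (k * b)
          * ((x b / (b - L)) * (Real.sin (k * b) / (b - L))⁻¹ * x b))
        (𝓝[Set.Ioo (0:ℝ) L] L) (𝓝 (k * Real.cos (k * L) * (g L * (-k)⁻¹ * 0))) :=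
      hcos.mul ((hslopeL.mul (hsinslopeL.inv₀ (by simpa using ne_of_gt hk))).mul hxL')
    have hlim0 : (k * Real.cos (k * L) * (g L * (-k)⁻¹ * 0) : ℝ) = 0 := by ring
    rw [hlim0] at hlim
    refine Tendsto.congr' ?_ hlim
    filter_upwards [self_mem_nhdsWithin] with b hb
    have hs' : Real.sin (k * b) ≠ 0 := ne_of_gt (hsin b hb)
    have hb' : b - L ≠ 0 := sub_ne_zero.mpr (ne_of_lt hb.2)
    rw [hG_def]
    field_simp
  have hcomp : Tendsto (fun a : ℝ => L - a) (𝓝[>] (0:ℝ)) (𝓝[Set.Ioo (0:ℝ) L] L) := by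
    rw [tendsto_nhdsWithin_iff]
    constructor
    · have : Tendsto (fun a : ℝ => L - a) (𝓝 (0:ℝ)) (𝓝 (L - 0)) :=
        (continuous_const.sub continuous_id).tendsto 0
      simpa using this.mono_left nhdsWithin_le_nhds
    · filter_upwards [hIooMem] with a ha
      exact ⟨by linarith [ha.2], by linarith [ha.1]⟩
  have hGL : Tendsto (fun a => G (L - a)) (𝓝[>] (0:ℝ)) (𝓝 0) := hGLlim.comp hcomp
  have hFc : ContinuousOn (fun t => ∫ l in (0:ℝ)..t, ψ l) (Set.Icc 0 L) := by
    have := intervalIntegral.continuousOn_primitive_interval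
      (f := ψ) (μ := volume) (a := 0) (b := L)
      (by rw [Set.uIcc_of_le hL.le]
          exact hψc.integrableOn_compact isCompact_Icc)
    rwa [Set.uIcc_of_le hL.le] at this
  have hF0 : Tendsto (fun a => ∫ l in (0:ℝ)..a, ψ l) (𝓝[>] (0:ℝ)) (𝓝 0) := by
    have h := hFc.continuousWithinAt (Set.left_mem_Icc.mpr hL.le)
    rw [ContinuousWithinAt] at h
    simp only [intervalIntegral.integral_same] at h
    exact h.mono_left (hfil.trans (nhdsWithin_mono _ Set.Ioo_subset_Icc_self))
  have hFL : Tendsto (fun a => ∫ l in (0:ℝ)..(L - a), ψ l) (𝓝[>] (0:ℝ))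
      (𝓝 (∫ l in (0:ℝ)..L, ψ l)) := by
    have h := hFc.continuousWithinAt (Set.right_mem_Icc.mpr hL.le)
    rw [ContinuousWithinAt] at h
    have hcomp' : Tendsto (fun a : ℝ => L - a) (𝓝[>] (0:ℝ)) (𝓝[Set.Icc (0:ℝ) L] L) :=
      hcomp.mono_right (nhdsWithin_mono _ Set.Ioo_subset_Icc_self)
    exact h.comp hcomp'
  have hmain : (0:ℝ) - 0 ≤ (∫ l in (0:ℝ)..L, ψ l) - 0 := by
    refine le_of_tendsto_of_tendsto (hGL.sub hG0) (hFL.sub hF0) ?_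
    filter_upwards [Ioo_mem_nhdsGT_of_mem ⟨le_refl (0:ℝ), half_pos hL⟩] with a ha
    exact step a ha
  have hψval : ∫ l in (0:ℝ)..L, ψ l
      = (∫ l in (0:ℝ)..L, (g l) ^ 2) - k ^ 2 * ∫ l in (0:ℝ)..L, (x l) ^ 2 := by
    rw [hψ_def]
    rw [intervalIntegral.integral_sub
      ((hgc.fun_pow 2).mono (by rw [Set.uIcc_of_le hL.le]) |>.intervalIntegrable)
      (((continuousOn_const.fun_mul (hxc.fun_pow 2)).mono
        (by rw [Set.uIcc_of_le hL.le])).intervalIntegrable)]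
    rw [intervalIntegral.integral_const_mul]
  have hk2 : k ^ 2 = Real.pi ^ 2 / L ^ 2 := by rw [hk_def, div_pow]
  rw [hψval] at hmain
  rw [← hk2]
  linarith [hmain]

/-- Core dissipation estimate (48) in the proof of Theorem 5.1 of the paper for
`q = 1`: the Lie derivative of `Z(x) = ∫₀^L (x')² dl` along
`∂x/∂t = c ∂²x/∂l² + f(x, ∂x/∂l) + (∂x/∂l)·u` with Dirichlet boundary
conditions, where `α̂(s) = (π²/L²)(c−ε)s + L·η(s/L)`. -/
theorem dissipation_estimate_48 (L c ε ω : ℝ) (hL : 0 < L) (hc : 0 < c) (hε : 0 < ε)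
    (hω : 0 < ω) (hωε : ω < 2 * ε) (hωc : ω ≤ 2 * c)
    (f : ℝ × ℝ → ℝ) (hf : Continuous f)
    (η : ℝ → ℝ) (hη : ContinuousOn η (Set.Ici 0))
    (hηconv : ConvexOn ℝ (Set.Ici 0) η)
    (αhat : ℝ → ℝ)
    (hαhat : ∀ s : ℝ, 0 ≤ s → αhat s = Real.pi ^ 2 / L ^ 2 * (c - ε) * s + L * η (s / L))
    (x : ℝ → ℝ) (hx : ContDiffOn ℝ 2 x (Set.Icc 0 L))
    (hx0 : x 0 = 0) (hxL : x L = 0)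
    (u : ℝ → ℝ) (hu : ContinuousOn u (Set.Icc 0 L))
    (hyp : ∫ l in (0:ℝ)..L, deriv (deriv x) l * f (x l, deriv x l)
            ≥ ∫ l in (0:ℝ)..L, η ((deriv x l) ^ 2)) :
    -2 * ∫ l in (0:ℝ)..L, deriv (deriv x) l *
        (c * deriv (deriv x) l + f (x l, deriv x l) + deriv x l * u l)
      ≤ 2 * (ω/2 - ε) * (Real.pi ^ 2 / L ^ 2) * (∫ l in (0:ℝ)..L, (deriv x l) ^ 2)
        - 2 * αhat (∫ l in (0:ℝ)..L, (deriv x l) ^ 2)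
        + ((∫ l in (0:ℝ)..L, (deriv x l) ^ 2) / ω)
            * ⨆ l : Set.Icc (0:ℝ) L, (u (l : ℝ)) ^ 2 := by
  have huDiff : UniqueDiffOn ℝ (Set.Icc (0:ℝ) L) := uniqueDiffOn_Icc hL
  have hx1 : DifferentiableOn ℝ x (Set.Icc 0 L) := hx.differentiableOn (by norm_num)
  set g : ℝ → ℝ := derivWithin x (Set.Icc 0 L) with hg_def
  have hgC1 : ContDiffOn ℝ 1 g (Set.Icc 0 L) := hx.derivWithin huDiff (by norm_num)
  have hgc : ContinuousOn g (Set.Icc 0 L) := hgC1.continuousOn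
  have hg1 : DifferentiableOn ℝ g (Set.Icc 0 L) := hgC1.differentiableOn (by norm_num)
  set g2 : ℝ → ℝ := derivWithin g (Set.Icc 0 L) with hg2_def
  have hg2c : ContinuousOn g2 (Set.Icc 0 L) :=
    hgC1.continuousOn_derivWithin huDiff (le_refl 1)
  have hmem : ∀ l ∈ Set.Ioo (0:ℝ) L, Set.Icc (0:ℝ) L ∈ 𝓝 l := fun l hl =>
    Icc_mem_nhds hl.1 hl.2
  have hdx : ∀ l ∈ Set.Ioo (0:ℝ) L, HasDerivAt x (g l) l := fun l hl =>
    ((hx1 l (Set.Ioo_subset_Icc_self hl)).hasDerivWithinAt).hasDerivAt (hmem l hl)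
  have hdg : ∀ l ∈ Set.Ioo (0:ℝ) L, HasDerivAt g (g2 l) l := fun l hl =>
    ((hg1 l (Set.Ioo_subset_Icc_self hl)).hasDerivWithinAt).hasDerivAt (hmem l hl)
  have hgx : ∀ l ∈ Set.Ioo (0:ℝ) L, deriv x l = g l := fun l hl =>
    (derivWithin_of_mem_nhds (hmem l hl)).symm
  have hg2x : ∀ l ∈ Set.Ioo (0:ℝ) L, deriv (deriv x) l = g2 l := by
    intro l hl
    have hev : deriv x =ᶠ[𝓝 l] g := by
      filter_upwards [isOpen_Ioo.mem_nhds hl] with t ht using hgx t ht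
    rw [hev.deriv_eq]
    exact (hdg l hl).deriv
  -- congruence of interval integrals
  have hIcongr : ∀ (F1 F2 : ℝ → ℝ), (∀ l ∈ Set.Ioo (0:ℝ) L, F1 l = F2 l) →
      ∫ l in (0:ℝ)..L, F1 l = ∫ l in (0:ℝ)..L, F2 l := by
    intro F1 F2 h
    apply intervalIntegral.integral_congr_ae
    have hLne : ∀ᵐ (l:ℝ), l ≠ L := by
      have h0 : (volume : Measure ℝ) {L} = 0 := measure_singleton L
      filter_upwards [MeasureTheory.measure_eq_zero_iff_ae_notMem.mp h0] with l hl
      simpa using hl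
    filter_upwards [hLne] with l hl hmem'
    rw [Set.uIoc_of_le hL.le] at hmem'
    exact h l ⟨hmem'.1, lt_of_le_of_ne hmem'.2 hl⟩
  have hI1 : ∫ l in (0:ℝ)..L, (deriv x l) ^ 2 = ∫ l in (0:ℝ)..L, (g l) ^ 2 :=
    hIcongr _ _ fun l hl => by rw [hgx l hl]
  have hI2 : (∫ l in (0:ℝ)..L, deriv (deriv x) l *
        (c * deriv (deriv x) l + f (x l, deriv x l) + deriv x l * u l))
      = ∫ l in (0:ℝ)..L, g2 l * (c * g2 l + f (x l, g l) + g l * u l) :=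
    hIcongr _ _ fun l hl => by rw [hgx l hl, hg2x l hl]
  have hyp' : ∫ l in (0:ℝ)..L, g2 l * f (x l, g l) ≥ ∫ l in (0:ℝ)..L, η ((g l) ^ 2) := by
    have e1 : ∫ l in (0:ℝ)..L, deriv (deriv x) l * f (x l, deriv x l)
        = ∫ l in (0:ℝ)..L, g2 l * f (x l, g l) :=
      hIcongr _ _ fun l hl => by rw [hgx l hl, hg2x l hl]
    have e2 : ∫ l in (0:ℝ)..L, η ((deriv x l) ^ 2) = ∫ l in (0:ℝ)..L, η ((g l) ^ 2) :=
      hIcongr _ _ fun l hl => by rw [hgx l hl]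
    rw [← e1, ← e2]; exact hyp
  rw [hI1, hI2]
  -- notation
  set Z := ∫ l in (0:ℝ)..L, (g l) ^ 2 with hZdef
  have hZ0 : 0 ≤ Z := intervalIntegral.integral_nonneg hL.le fun t _ => sq_nonneg _
  haveI : Nonempty (Set.Icc (0:ℝ) L) := ⟨⟨0, Set.left_mem_Icc.mpr hL.le⟩⟩
  set S := ⨆ l : Set.Icc (0:ℝ) L, (u (l:ℝ)) ^ 2 with hSdef
  have hSle : ∀ l ∈ Set.Icc (0:ℝ) L, (u l) ^ 2 ≤ S := by
    have hbdd : BddAbove (Set.range fun l : Set.Icc (0:ℝ) L => (u (l:ℝ)) ^ 2) := by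
      have himg : BddAbove ((fun l => (u l) ^ 2) '' Set.Icc (0:ℝ) L) :=
        (isCompact_Icc.image_of_continuousOn (hu.pow 2)).bddAbove
      have heq : ((fun l => (u l) ^ 2) '' Set.Icc (0:ℝ) L)
          = Set.range (fun l : Set.Icc (0:ℝ) L => (u (l:ℝ)) ^ 2) := Set.image_eq_range _ _
      rwa [heq] at himg
    intro l hl
    exact le_ciSup hbdd ⟨l, hl⟩
  -- continuity / integrability facts
  have hcx : ContinuousOn x (Set.Icc 0 L) := hx.continuousOn
  have hcF : ContinuousOn (fun l => f (x l, g l)) (Set.Icc 0 L) :=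
    hf.comp_continuousOn (hcx.prodMk hgc)
  have hII : ∀ (F : ℝ → ℝ), ContinuousOn F (Set.Icc 0 L) →
      IntervalIntegrable F volume 0 L := fun F hF => by
    apply ContinuousOn.intervalIntegrable
    rwa [Set.uIcc_of_le hL.le]
  have hint_g2sq : IntervalIntegrable (fun l => (g2 l) ^ 2) volume 0 L :=
    hII _ (hg2c.pow 2)
  have hint_gsq : IntervalIntegrable (fun l => (g l) ^ 2) volume 0 L := hII _ (hgc.pow 2)
  have hint_xsq : IntervalIntegrable (fun l => (x l) ^ 2) volume 0 L := hII _ (hcx.pow 2)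
  have hint_g2F : IntervalIntegrable (fun l => g2 l * f (x l, g l)) volume 0 L :=
    hII _ (hg2c.mul hcF)
  have hint_g2gu : IntervalIntegrable (fun l => g2 l * (g l * u l)) volume 0 L :=
    hII _ (hg2c.mul (hgc.mul hu))
  have hint_g2x : IntervalIntegrable (fun l => g2 l * x l) volume 0 L :=
    hII _ (hg2c.mul hcx)
  -- split the main integral
  have hsplit : ∫ l in (0:ℝ)..L, g2 l * (c * g2 l + f (x l, g l) + g l * u l)
      = c * (∫ l in (0:ℝ)..L, (g2 l) ^ 2) + (∫ l in (0:ℝ)..L, g2 l * f (x l, g l))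
        + ∫ l in (0:ℝ)..L, g2 l * (g l * u l) := by
    have e : ∫ l in (0:ℝ)..L, g2 l * (c * g2 l + f (x l, g l) + g l * u l)
        = ∫ l in (0:ℝ)..L, (c * (g2 l) ^ 2 + g2 l * f (x l, g l) + g2 l * (g l * u l)) := by
      apply intervalIntegral.integral_congr
      intro l _
      ring
    rw [e, intervalIntegral.integral_add (((hint_g2sq.const_mul c)).add hint_g2F) hint_g2gu,
      intervalIntegral.integral_add (hint_g2sq.const_mul c) hint_g2F,
      intervalIntegral.integral_const_mul]
  -- Young's inequality
  have hYoung : -2 * (∫ l in (0:ℝ)..L, g2 l * (g l * u l))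
      ≤ ω * (∫ l in (0:ℝ)..L, (g2 l) ^ 2) + S / ω * Z := by
    have h1 : ∫ l in (0:ℝ)..L, (-2 : ℝ) * (g2 l * (g l * u l))
        ≤ ∫ l in (0:ℝ)..L, (ω * (g2 l) ^ 2 + S / ω * (g l) ^ 2) := by
      apply intervalIntegral.integral_mono_on hL.le (hint_g2gu.const_mul (-2))
        ((hint_g2sq.const_mul ω).add (hint_gsq.const_mul (S / ω)))
      intro t ht
      have hu2 : (u t) ^ 2 ≤ S := hSle t ht
      have hsq : 0 ≤ (ω * g2 t + g t * u t) ^ 2 := sq_nonneg _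
      have h3 : (g t) ^ 2 * (u t) ^ 2 ≤ (g t) ^ 2 * S :=
        mul_le_mul_of_nonneg_left hu2 (sq_nonneg _)
      have h4 : S / ω * ω = S := div_mul_cancel₀ _ (ne_of_gt hω)
      nlinarith [hsq, h3, h4, hω, sq_nonneg (g t)]
    rw [intervalIntegral.integral_const_mul,
      intervalIntegral.integral_add (hint_g2sq.const_mul ω) (hint_gsq.const_mul (S / ω)),
      intervalIntegral.integral_const_mul, intervalIntegral.integral_const_mul] at h1
    linarith [h1]
  -- Jensen's inequality
  have hJensen : L * η (Z / L) ≤ ∫ l in (0:ℝ)..L, η ((g l) ^ 2) := by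
    have hμ0 : volume (Set.Ioc (0:ℝ) L) ≠ 0 := by
      simp [Real.volume_Ioc, hL, ne_of_gt hL]
    have hμt : volume (Set.Ioc (0:ℝ) L) ≠ ⊤ := by simp [Real.volume_Ioc]
    have hfs : ∀ᵐ l ∂(volume.restrict (Set.Ioc (0:ℝ) L)), (g l) ^ 2 ∈ Set.Ici (0:ℝ) :=
      Filter.Eventually.of_forall fun l => Set.mem_Ici.mpr (sq_nonneg _)
    have hfi : IntegrableOn (fun l => (g l) ^ 2) (Set.Ioc 0 L) volume :=
      ((hgc.pow 2).integrableOn_compact isCompact_Icc).mono_set Set.Ioc_subset_Icc_self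
    have hηg : ContinuousOn (η ∘ fun l => (g l) ^ 2) (Set.Icc 0 L) :=
      hη.comp (hgc.pow 2) fun l _ => Set.mem_Ici.mpr (sq_nonneg _)
    have hgi : IntegrableOn (η ∘ fun l => (g l) ^ 2) (Set.Ioc 0 L) volume :=
      (hηg.integrableOn_compact isCompact_Icc).mono_set Set.Ioc_subset_Icc_self
    have hjen := hηconv.map_set_average_le hη isClosed_Ici hμ0 hμt hfs hfi hgi
    have hvol : (volume (Set.Ioc (0:ℝ) L)).toReal = L := by
      simp [Real.volume_Ioc, ENNReal.toReal_ofReal hL.le]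
    rw [MeasureTheory.setAverage_eq, MeasureTheory.setAverage_eq, measureReal_def, hvol, smul_eq_mul,
      smul_eq_mul] at hjen
    have hIoc1 : ∫ l in Set.Ioc (0:ℝ) L, (g l) ^ 2 = Z := by
      rw [hZdef, intervalIntegral.integral_of_le hL.le]
    have hIoc2 : ∫ l in Set.Ioc (0:ℝ) L, η ((g l) ^ 2) = ∫ l in (0:ℝ)..L, η ((g l) ^ 2) := by
      rw [intervalIntegral.integral_of_le hL.le]
    have hZL : Z / L = L⁻¹ * Z := by rw [div_eq_inv_mul]
    rw [hIoc1] at hjen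
    have hjen2 : η (Z / L) ≤ L⁻¹ * ∫ l in Set.Ioc (0:ℝ) L, η ((g l) ^ 2) := by
      rw [hZL]; exact hjen
    have := mul_le_mul_of_nonneg_left hjen2 hL.le
    rw [← mul_assoc, mul_inv_cancel₀ (ne_of_gt hL), one_mul, hIoc2] at this
    exact this
  -- Wirtinger-type estimate via integration by parts + Cauchy-Schwarz + Poincaré
  have hA : Real.pi ^ 2 / L ^ 2 * Z ≤ ∫ l in (0:ℝ)..L, (g2 l) ^ 2 := by
    set A := ∫ l in (0:ℝ)..L, (g2 l) ^ 2 with hAdef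
    set C := ∫ l in (0:ℝ)..L, (x l) ^ 2 with hCdef
    have hAnn : 0 ≤ A := intervalIntegral.integral_nonneg hL.le fun t _ => sq_nonneg _
    have hCnn : 0 ≤ C := intervalIntegral.integral_nonneg hL.le fun t _ => sq_nonneg _
    -- integration by parts : ∫ g2 * x = -Z
    have hB : ∫ l in (0:ℝ)..L, g2 l * x l = -Z := by
      have hP : ∀ t ∈ Set.Ioo (0:ℝ) L, HasDerivWithinAt (fun l => g l * x l)
          (g2 t * x t + g t * g t) (Set.Ioi t) t := fun t ht =>
        (((hdg t ht).mul (hdx t ht))).hasDerivWithinAt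
      have hcontP : ContinuousOn (fun l => g l * x l) (Set.Icc 0 L) := hgc.mul hcx
      have hintP : IntervalIntegrable (fun t => g2 t * x t + g t * g t) volume 0 L :=
        hII _ ((hg2c.mul hcx).add (hgc.mul hgc))
      have hftc := intervalIntegral.integral_eq_sub_of_hasDeriv_right_of_le hL.le
        hcontP hP hintP
      rw [hx0, hxL, mul_zero, mul_zero, sub_zero] at hftc
      have hadd : ∫ t in (0:ℝ)..L, (g2 t * x t + g t * g t)
          = (∫ t in (0:ℝ)..L, g2 t * x t) + ∫ t in (0:ℝ)..L, g t * g t :=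
        intervalIntegral.integral_add hint_g2x (hII _ (hgc.mul hgc))
      have hgg : ∫ t in (0:ℝ)..L, g t * g t = Z := by
        rw [hZdef]
        apply intervalIntegral.integral_congr
        intro l _
        exact (sq (g l)).symm
      rw [hadd, hgg] at hftc
      linarith [hftc]
    -- Poincaré
    have hpoin : Real.pi ^ 2 / L ^ 2 * C ≤ Z :=
      poincare_sharp L hL x g hcx hgc hdx
        (hx1 0 (Set.left_mem_Icc.mpr hL.le)).hasDerivWithinAt
        (hx1 L (Set.right_mem_Icc.mpr hL.le)).hasDerivWithinAt hx0 hxL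
    -- Cauchy-Schwarz via discriminant
    have hq : ∀ t : ℝ, 0 ≤ C * (t * t) + (2 * ∫ l in (0:ℝ)..L, g2 l * x l) * t + A := by
      intro t
      have hnn : 0 ≤ ∫ l in (0:ℝ)..L, (t * x l + g2 l) ^ 2 :=
        intervalIntegral.integral_nonneg hL.le fun s _ => sq_nonneg _
      have he : ∫ l in (0:ℝ)..L, (t * x l + g2 l) ^ 2
          = (t * t) * C + (2 * t) * (∫ l in (0:ℝ)..L, g2 l * x l) + A := by
        have e : ∫ l in (0:ℝ)..L, (t * x l + g2 l) ^ 2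
            = ∫ l in (0:ℝ)..L, ((t * t) * (x l) ^ 2 + (2 * t) * (g2 l * x l) + (g2 l) ^ 2) := by
          apply intervalIntegral.integral_congr
          intro l _
          ring
        rw [e, intervalIntegral.integral_add ((hint_xsq.const_mul (t * t)).add
            (hint_g2x.const_mul (2 * t))) hint_g2sq,
          intervalIntegral.integral_add (hint_xsq.const_mul (t * t))
            (hint_g2x.const_mul (2 * t)),
          intervalIntegral.integral_const_mul, intervalIntegral.integral_const_mul]
      rw [he] at hnn
      linarith [hnn]
    have hdisc := discrim_le_zero hq
    rw [discrim] at hdisc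
    rw [hB] at hdisc
    -- hdisc : (2 * -Z)^2 - 4 * C * A ≤ 0
    have hCS : Z ^ 2 ≤ C * A := by
      have e0 : (2 * -Z) ^ 2 = 4 * Z ^ 2 := by ring
      linarith [hdisc, e0]
    have hp : (0:ℝ) < Real.pi ^ 2 / L ^ 2 := by positivity
    by_cases hZz : Z = 0
    · rw [hZz, mul_zero]; exact hAnn
    · have hZpos : 0 < Z := lt_of_le_of_ne hZ0 (Ne.symm hZz)
      have m1 : Real.pi ^ 2 / L ^ 2 * Z ^ 2 ≤ Real.pi ^ 2 / L ^ 2 * (C * A) :=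
        mul_le_mul_of_nonneg_left hCS hp.le
      have m2 : (Real.pi ^ 2 / L ^ 2 * C) * A ≤ Z * A :=
        mul_le_mul_of_nonneg_right hpoin hAnn
      have e1 : Real.pi ^ 2 / L ^ 2 * (C * A) = (Real.pi ^ 2 / L ^ 2 * C) * A := by ring
      have e2 : Real.pi ^ 2 / L ^ 2 * Z ^ 2 = (Real.pi ^ 2 / L ^ 2 * Z) * Z := by ring
      have e3 : Z * A = A * Z := by ring
      have hfin : (Real.pi ^ 2 / L ^ 2 * Z) * Z ≤ A * Z := by linarith [m1, m2, e1, e2, e3]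
      exact le_of_mul_le_mul_right hfin hZpos
  -- assemble everything
  rw [hαhat Z hZ0, hsplit]
  have h5 : (ω - 2 * c) * (∫ l in (0:ℝ)..L, (g2 l) ^ 2)
      ≤ (ω - 2 * c) * (Real.pi ^ 2 / L ^ 2 * Z) := by
    apply mul_le_mul_of_nonpos_left hA (by linarith)
  have e : Z / ω * S = S / ω * Z := by ring
  rw [e]
  linarith [hyp', hJensen, hYoung, h5]
end

section
/- Let a ∈ ℝ, b ≥ 0, and ω ∈ (0, 2]. Let x : [0,π] → ℝ be twice continuously differentiable with x(0) = x(π) = 0, and let u : [0,π] → ℝ be continuous. Then, writing Z := ∫₀^π x'(l)² dl, it holds that −2∫₀^π x''(l) · ( x''(l) + a·x(l) − b·x(l)·x'(l)² + u(l) ) dl ≤ −2(1 − a − ω/2)·Z − (2b/(3π))·Z² + (1/ω)·∫₀^π u(l)² dl. -/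
open Real MeasureTheory intervalIntegral

open Set


lemma contii {f : ℝ → ℝ} (h : ContinuousOn f (Set.Icc 0 π)) : IntervalIntegrable f volume 0 π := by
  apply ContinuousOn.intervalIntegrable; rwa [Set.uIcc_of_le pi_nonneg]

lemma icongr {f₁ f₂ : ℝ → ℝ} (h : ∀ l ∈ Set.Ioo (0:ℝ) π, f₁ l = f₂ l) :
    ∫ l in (0:ℝ)..π, f₁ l = ∫ l in (0:ℝ)..π, f₂ l := by
  rw [intervalIntegral.integral_of_le pi_nonneg, intervalIntegral.integral_of_le pi_nonneg,
    MeasureTheory.integral_Ioc_eq_integral_Ioo, MeasureTheory.integral_Ioc_eq_integral_Ioo]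
  exact MeasureTheory.setIntegral_congr_fun measurableSet_Ioo h

-- Cauchy-Schwarz
lemma cs {f g : ℝ → ℝ} (hf2 : IntervalIntegrable (fun l => f l ^ 2) volume 0 π)
    (hg2 : IntervalIntegrable (fun l => g l ^ 2) volume 0 π)
    (hfg : IntervalIntegrable (fun l => f l * g l) volume 0 π) :
    (∫ l in (0:ℝ)..π, f l * g l) ^ 2 ≤ (∫ l in (0:ℝ)..π, f l ^ 2) * ∫ l in (0:ℝ)..π, g l ^ 2 := by
  set A := ∫ l in (0:ℝ)..π, f l ^ 2 with hA
  set B := ∫ l in (0:ℝ)..π, f l * g l with hB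
  set C := ∫ l in (0:ℝ)..π, g l ^ 2 with hC
  have key : ∀ t : ℝ, 0 ≤ C * (t * t) + (2 * B) * t + A := by
    intro t
    have h1 : C * (t * t) + (2 * B) * t + A
        = ∫ l in (0:ℝ)..π, (t ^ 2 * g l ^ 2 + (2 * t) * (f l * g l) + f l ^ 2) := by
      rw [intervalIntegral.integral_add ((hg2.const_mul (t^2)).add (hfg.const_mul (2*t))) hf2,
        intervalIntegral.integral_add (hg2.const_mul (t^2)) (hfg.const_mul (2*t)),
        intervalIntegral.integral_const_mul, intervalIntegral.integral_const_mul,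
        ← hA, ← hB, ← hC]
      ring
    have h2 : (∫ l in (0:ℝ)..π, (t ^ 2 * g l ^ 2 + (2 * t) * (f l * g l) + f l ^ 2))
        = ∫ l in (0:ℝ)..π, (t * g l + f l) ^ 2 := by
      congr 1; funext l; ring
    rw [h1, h2]
    exact intervalIntegral.integral_nonneg pi_nonneg (fun u _ => sq_nonneg _)
  have := discrim_le_zero key
  rw [discrim] at this
  nlinarith [this]


lemma xbound {x g : ℝ → ℝ} (hxc : ContinuousOn x (Set.Icc 0 π))
    (hgc : ContinuousOn g (Set.Icc 0 π))
    (hgd : ∀ l ∈ Set.Ioo (0:ℝ) π, HasDerivAt x (g l) l)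
    (hx0 : x 0 = 0) (hxpi : x π = 0) {M : ℝ} (hM : ∀ l ∈ Set.Icc (0:ℝ) π, ‖g l‖ ≤ M) :
    ∀ l ∈ Set.Icc (0:ℝ) π, |x l| ≤ M * min l (π - l) := by
  intro l hl
  have h1 : x l = ∫ t in (0:ℝ)..l, g t := by
    have := intervalIntegral.integral_eq_sub_of_hasDerivAt_of_le hl.1
      (hxc.mono (Set.Icc_subset_Icc le_rfl hl.2))
      (fun t ht => hgd t ⟨ht.1, lt_of_lt_of_le ht.2 hl.2⟩)
      (ContinuousOn.intervalIntegrable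
        (by rw [Set.uIcc_of_le hl.1]; exact hgc.mono (Set.Icc_subset_Icc le_rfl hl.2)))
    rw [this, hx0, sub_zero]
  have h2 : x l = -∫ t in l..π, g t := by
    have := intervalIntegral.integral_eq_sub_of_hasDerivAt_of_le hl.2
      (hxc.mono (Set.Icc_subset_Icc hl.1 le_rfl))
      (fun t ht => hgd t ⟨lt_of_le_of_lt hl.1 ht.1, ht.2⟩)
      (ContinuousOn.intervalIntegrable
        (by rw [Set.uIcc_of_le hl.2]; exact hgc.mono (Set.Icc_subset_Icc hl.1 le_rfl)))
    rw [this, hxpi]; ring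
  have b1 : |x l| ≤ M * l := by
    rw [h1]
    have := intervalIntegral.norm_integral_le_of_norm_le_const (C := M) (a := 0) (b := l)
      (f := g) (fun t ht => by
        rw [Set.uIoc_of_le hl.1] at ht
        exact hM t ⟨le_of_lt ht.1, le_trans ht.2 hl.2⟩)
    simpa [abs_of_nonneg hl.1, mul_comm] using this
  have b2 : |x l| ≤ M * (π - l) := by
    rw [h2, abs_neg]
    have := intervalIntegral.norm_integral_le_of_norm_le_const (C := M) (a := l) (b := π)
      (f := g) (fun t ht => by
        rw [Set.uIoc_of_le hl.2] at ht
        exact hM t ⟨le_trans hl.1 (le_of_lt ht.1), ht.2⟩)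
    rw [abs_of_nonneg (by linarith [hl.2] : (0:ℝ) ≤ π - l)] at this
    simpa [mul_comm] using this
  rcases le_total l (π - l) with h | h
  · rwa [min_eq_left h]
  · rwa [min_eq_right h]

lemma sinbound : ∀ l ∈ Set.Icc (0:ℝ) π, 2 / π * min l (π - l) ≤ sin l := by
  intro l hl
  rcases le_total l (π / 2) with h | h
  · calc 2 / π * min l (π - l) ≤ 2 / π * l := by
          apply mul_le_mul_of_nonneg_left (min_le_left _ _) (by positivity)
      _ ≤ sin l := mul_le_sin hl.1 h
  · have h1 : sin l = sin (π - l) := (Real.sin_pi_sub l).symm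
    rw [h1]
    calc 2 / π * min l (π - l) ≤ 2 / π * (π - l) := by
          apply mul_le_mul_of_nonneg_left (min_le_right _ _) (by positivity)
      _ ≤ sin (π - l) := mul_le_sin (by linarith [hl.2]) (by linarith)

lemma wirtinger_s15 {x g : ℝ → ℝ} (hxc : ContinuousOn x (Set.Icc 0 π))
    (hgc : ContinuousOn g (Set.Icc 0 π))
    (hgd : ∀ l ∈ Set.Ioo (0:ℝ) π, HasDerivAt x (g l) l)
    (hx0 : x 0 = 0) (hxpi : x π = 0) :
    ∫ l in (0:ℝ)..π, (x l) ^ 2 ≤ ∫ l in (0:ℝ)..π, (g l) ^ 2 := by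
  obtain ⟨M, hM⟩ := (isCompact_Icc).exists_bound_of_continuousOn hgc
  have hM0 : 0 ≤ M := le_trans (norm_nonneg _) (hM π ⟨pi_nonneg, le_rfl⟩)
  have hxb := xbound hxc hgc hgd hx0 hxpi hM
  set C := M * π / 2 with hC
  have hC0 : 0 ≤ C := by positivity
  -- bound on x * cos / sin on the open interval
  have hv : ∀ l ∈ Set.Ioo (0:ℝ) π, |x l * cos l / sin l| ≤ C := by
    intro l hl
    have hsp : 0 < sin l := sin_pos_of_pos_of_lt_pi hl.1 hl.2
    have hmin : 0 ≤ min l (π - l) := le_min (le_of_lt hl.1) (by linarith [hl.2])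
    have hsin := sinbound l ⟨le_of_lt hl.1, le_of_lt hl.2⟩
    rw [abs_div, abs_of_pos hsp, div_le_iff₀ hsp]
    have h1 : |x l * cos l| ≤ M * min l (π - l) := by
      rw [abs_mul]
      calc |x l| * |cos l| ≤ (M * min l (π - l)) * 1 :=
            mul_le_mul (hxb l ⟨le_of_lt hl.1, le_of_lt hl.2⟩) (abs_cos_le_one l)
              (abs_nonneg _) (by positivity)
        _ = M * min l (π - l) := by ring
    have h2 : M * min l (π - l) ≤ C * sin l := by
      calc M * min l (π - l) = C * (2 / π * min l (π - l)) := by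
            rw [hC]; field_simp
        _ ≤ C * sin l := mul_le_mul_of_nonneg_left hsin hC0
    linarith
  -- the auxiliary function and its derivative
  set w : ℝ → ℝ := fun l => x l ^ 2 * (cos l / sin l) with hw
  have hw0 : w 0 = 0 := by simp [hw, hx0]
  have hwpi : w π = 0 := by simp [hw, hxpi]
  have hwb : ∀ l ∈ Set.Icc (0:ℝ) π, |w l| ≤ C * |x l| := by
    intro l hl
    rcases eq_or_lt_of_le hl.1 with h0 | h0
    · simp [hw, ← h0, hx0]
    rcases eq_or_lt_of_le hl.2 with hp | hp
    · simp [hw, hp, hxpi]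
    have : w l = x l * (x l * cos l / sin l) := by rw [hw]; ring
    rw [this, abs_mul, mul_comm]
    exact mul_le_mul_of_nonneg_right (hv l ⟨h0, hp⟩) (abs_nonneg _)
  have hwc : ContinuousOn w (Set.Icc 0 π) := by
    intro l hl
    rcases eq_or_lt_of_le hl.1 with h0 | h0
    · -- continuity at 0 by squeeze
      rw [ContinuousWithinAt, ← h0, hw0]
      rw [tendsto_zero_iff_abs_tendsto_zero]
      apply squeeze_zero' (Filter.Eventually.of_forall (fun t => abs_nonneg _))
        (eventually_nhdsWithin_of_forall (fun t ht => hwb t ht))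
      have : Filter.Tendsto (fun t => C * |x t|) (nhdsWithin 0 (Set.Icc 0 π))
          (nhds (C * |x 0|)) :=
        ((hxc 0 ⟨le_rfl, pi_nonneg⟩).abs.const_smul C : _)
      simpa [hx0] using this
    rcases eq_or_lt_of_le hl.2 with hp | hp
    · rw [ContinuousWithinAt, hp, hwpi]
      rw [tendsto_zero_iff_abs_tendsto_zero]
      apply squeeze_zero' (Filter.Eventually.of_forall (fun t => abs_nonneg _))
        (eventually_nhdsWithin_of_forall (fun t ht => hwb t ht))
      have : Filter.Tendsto (fun t => C * |x t|) (nhdsWithin π (Set.Icc 0 π))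
          (nhds (C * |x π|)) :=
        ((hxc π ⟨pi_nonneg, le_rfl⟩).abs.const_smul C : _)
      simpa [hxpi, hp] using this
    · have hsp : sin l ≠ 0 := ne_of_gt (sin_pos_of_pos_of_lt_pi h0 hp)
      exact (((hxc l hl).pow 2).mul
        ((Real.continuous_cos.continuousWithinAt).div
          (Real.continuous_sin.continuousWithinAt) hsp))
  set W : ℝ → ℝ := fun l => g l ^ 2 - x l ^ 2 - (g l - x l * cos l / sin l) ^ 2 with hWdef
  have hWd : ∀ l ∈ Set.Ioo (0:ℝ) π, HasDerivAt w (W l) l := by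
    intro l hl
    have hsp : sin l ≠ 0 := ne_of_gt (sin_pos_of_pos_of_lt_pi hl.1 hl.2)
    have hd1 : HasDerivAt (fun t => x t ^ 2) (2 * x l * g l) l := by
      have := (hgd l hl).fun_pow 2
      simpa [mul_comm, mul_assoc] using this
    have hd2 : HasDerivAt (fun t => cos t / sin t)
        ((-sin l * sin l - cos l * cos l) / sin l ^ 2) l :=
      (Real.hasDerivAt_cos l).div (Real.hasDerivAt_sin l) hsp
    have this : HasDerivAt (fun t => x t ^ 2 * (cos t / sin t)) _ l := hd1.fun_mul hd2
    convert this using 1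
    have hs2 : sin l ^ 2 + cos l ^ 2 = 1 := sin_sq_add_cos_sq l
    rw [hWdef]
    field_simp
    ring_nf
  -- integrability of the pieces
  have hg2i : IntervalIntegrable (fun l => g l ^ 2) volume 0 π := contii (hgc.pow 2)
  have hx2i : IntervalIntegrable (fun l => x l ^ 2) volume 0 π := contii (hxc.pow 2)
  have hsint : IntervalIntegrable (fun l => (g l - x l * cos l / sin l) ^ 2) volume 0 π := by
    rw [intervalIntegrable_iff_integrableOn_Ioo_of_le pi_nonneg]
    haveI : IsFiniteMeasure (volume.restrict (Set.Ioo (0:ℝ) π)) := by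
      constructor
      rw [Measure.restrict_apply_univ, Real.volume_Ioo]
      exact ENNReal.ofReal_lt_top
    constructor
    · apply ContinuousOn.aestronglyMeasurable _ measurableSet_Ioo
      apply ContinuousOn.pow
      apply ContinuousOn.sub (hgc.mono Set.Ioo_subset_Icc_self)
      apply ContinuousOn.div
      · exact (hxc.mono Set.Ioo_subset_Icc_self).mul Real.continuous_cos.continuousOn
      · exact Real.continuous_sin.continuousOn
      · exact fun l hl => ne_of_gt (sin_pos_of_pos_of_lt_pi hl.1 hl.2)
    · apply MeasureTheory.HasFiniteIntegral.of_bounded (C := (M + C) ^ 2)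
      rw [MeasureTheory.ae_restrict_iff' measurableSet_Ioo]
      apply Filter.Eventually.of_forall
      intro l hl
      have h1 : |g l - x l * cos l / sin l| ≤ M + C :=
        le_trans (abs_sub _ _)
          (add_le_add (hM l ⟨le_of_lt hl.1, le_of_lt hl.2⟩) (hv l hl))
      have h2 := abs_le.mp h1
      rw [Real.norm_eq_abs, abs_pow, sq_abs]
      exact sq_le_sq' (by linarith) h2.2
  have hWint : IntervalIntegrable W volume 0 π := (hg2i.sub hx2i).sub hsint
  have hftc : ∫ l in (0:ℝ)..π, W l = 0 := by
    rw [intervalIntegral.integral_eq_sub_of_hasDerivAt_of_le pi_nonneg hwc hWd hWint,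
      hw0, hwpi, sub_zero]
  have hsplit : ∫ l in (0:ℝ)..π, W l
      = (∫ l in (0:ℝ)..π, g l ^ 2) - (∫ l in (0:ℝ)..π, x l ^ 2)
        - ∫ l in (0:ℝ)..π, (g l - x l * cos l / sin l) ^ 2 := by
    rw [hWdef]
    rw [intervalIntegral.integral_sub (hg2i.sub hx2i) hsint,
      intervalIntegral.integral_sub hg2i hx2i]
  have hsnn : 0 ≤ ∫ l in (0:ℝ)..π, (g l - x l * cos l / sin l) ^ 2 :=
    intervalIntegral.integral_nonneg pi_nonneg (fun u _ => sq_nonneg _)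
  rw [hsplit] at hftc
  linarith

/-- Dissipation estimate (59) for the second subsystem of Example 1 of the
paper: the Lie derivative of `V₂(x) = ∫₀^π (x')² dl` along
`∂x/∂t = ∂²x/∂l² + a·x − b·x·(∂x/∂l)² + u` with Dirichlet boundary
conditions, where `Z = ∫₀^π (x')² dl`. -/
theorem dissipation_estimate_59 (a b ω : ℝ) (hb : 0 ≤ b) (hω0 : 0 < ω) (hω2 : ω ≤ 2)
    (x : ℝ → ℝ) (hx : ContDiffOn ℝ 2 x (Set.Icc 0 Real.pi))
    (hx0 : x 0 = 0) (hxpi : x Real.pi = 0)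
    (u : ℝ → ℝ) (hu : ContinuousOn u (Set.Icc 0 Real.pi)) :
    -2 * ∫ l in (0:ℝ)..Real.pi, deriv (deriv x) l *
        (deriv (deriv x) l + a * x l - b * x l * (deriv x l) ^ 2 + u l)
      ≤ -2 * (1 - a - ω/2) * (∫ l in (0:ℝ)..Real.pi, (deriv x l) ^ 2)
        - (2 * b / (3 * Real.pi)) * (∫ l in (0:ℝ)..Real.pi, (deriv x l) ^ 2) ^ 2
        + (1/ω) * ∫ l in (0:ℝ)..Real.pi, (u l) ^ 2 := by
  have hud : UniqueDiffOn ℝ (Set.Icc (0:ℝ) π) := uniqueDiffOn_Icc pi_pos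
  set g : ℝ → ℝ := derivWithin x (Set.Icc 0 π) with hgdef
  set h : ℝ → ℝ := derivWithin g (Set.Icc 0 π) with hhdef
  have hxc : ContinuousOn x (Set.Icc 0 π) := hx.continuousOn
  have hg1 : ContDiffOn ℝ 1 g (Set.Icc 0 π) := hx.derivWithin hud (by norm_num)
  have hgc : ContinuousOn g (Set.Icc 0 π) := hg1.continuousOn
  have hhc : ContinuousOn h (Set.Icc 0 π) :=
    (ContDiffOn.derivWithin (m := 0) hg1 hud (by norm_num)).continuousOn
  have hmem : ∀ l ∈ Set.Ioo (0:ℝ) π, Set.Icc (0:ℝ) π ∈ nhds l :=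
    fun l hl => Icc_mem_nhds hl.1 hl.2
  have hder1 : ∀ l ∈ Set.Ioo (0:ℝ) π, deriv x l = g l := by
    intro l hl
    rw [hgdef, derivWithin_of_mem_nhds (hmem l hl)]
  have hxd : ∀ l ∈ Set.Ioo (0:ℝ) π, HasDerivAt x (g l) l := by
    intro l hl
    rw [← hder1 l hl]
    exact (((hx.differentiableOn (by norm_num)) l (Set.Ioo_subset_Icc_self hl)
      ).differentiableAt (hmem l hl)).hasDerivAt
  have hgd : ∀ l ∈ Set.Ioo (0:ℝ) π, HasDerivAt g (h l) l := by
    intro l hl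
    have hda : DifferentiableAt ℝ g l :=
      ((hg1.differentiableOn (by norm_num)) l (Set.Ioo_subset_Icc_self hl)
        ).differentiableAt (hmem l hl)
    have : h l = deriv g l := by rw [hhdef, derivWithin_of_mem_nhds (hmem l hl)]
    rw [this]
    exact hda.hasDerivAt
  have hder2 : ∀ l ∈ Set.Ioo (0:ℝ) π, deriv (deriv x) l = h l := by
    intro l hl
    have heq : deriv x =ᶠ[nhds l] g := by
      filter_upwards [Ioo_mem_nhds hl.1 hl.2] with t ht
      exact hder1 t ht
    rw [heq.deriv_eq]
    exact (hgd l hl).deriv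
  -- replace deriv by g, h in the integrals
  have e1 : (∫ l in (0:ℝ)..π, (deriv x l) ^ 2) = ∫ l in (0:ℝ)..π, (g l) ^ 2 := by
    apply icongr; intro l hl; rw [hder1 l hl]
  have e2 : (∫ l in (0:ℝ)..π, deriv (deriv x) l *
        (deriv (deriv x) l + a * x l - b * x l * (deriv x l) ^ 2 + u l))
      = ∫ l in (0:ℝ)..π, h l * (h l + a * x l - b * x l * (g l) ^ 2 + u l) := by
    apply icongr; intro l hl; rw [hder1 l hl, hder2 l hl]
  rw [e1, e2]
  set Z := ∫ l in (0:ℝ)..π, (g l) ^ 2 with hZ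
  set H := ∫ l in (0:ℝ)..π, (h l) ^ 2 with hH
  set U := ∫ l in (0:ℝ)..π, (u l) ^ 2 with hU
  set G4 := ∫ l in (0:ℝ)..π, (g l) ^ 4 with hG4
  -- integrability
  have hg2i : IntervalIntegrable (fun l => g l ^ 2) volume 0 π := contii (hgc.pow 2)
  have hx2i : IntervalIntegrable (fun l => x l ^ 2) volume 0 π := contii (hxc.pow 2)
  have hh2i : IntervalIntegrable (fun l => h l ^ 2) volume 0 π := contii (hhc.pow 2)
  have hu2i : IntervalIntegrable (fun l => u l ^ 2) volume 0 π := contii (hu.pow 2)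
  have hg4i : IntervalIntegrable (fun l => g l ^ 4) volume 0 π := contii (hgc.pow 4)
  have hxhi : IntervalIntegrable (fun l => x l * h l) volume 0 π := contii (hxc.mul hhc)
  have hxg2hi : IntervalIntegrable (fun l => x l * g l ^ 2 * h l) volume 0 π :=
    contii ((hxc.mul (hgc.pow 2)).mul hhc)
  have hhui : IntervalIntegrable (fun l => h l * u l) volume 0 π := contii (hhc.mul hu)
  -- IBP 1 : ∫ x h = -Z
  have hIBP1 : (∫ l in (0:ℝ)..π, x l * h l) = -Z := by
    have hftc : ∫ l in (0:ℝ)..π, (g l * g l + x l * h l) = x π * g π - x 0 * g 0 :=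
      intervalIntegral.integral_eq_sub_of_hasDerivAt_of_le pi_nonneg
        (hxc.mul hgc) (fun l hl => (hxd l hl).mul (hgd l hl))
        (contii ((hgc.mul hgc).add (hxc.mul hhc)))
    rw [hx0, hxpi, zero_mul, zero_mul, sub_zero] at hftc
    rw [intervalIntegral.integral_add (contii (hgc.fun_mul hgc)) hxhi] at hftc
    have : (∫ l in (0:ℝ)..π, g l * g l) = Z := by
      rw [hZ]; apply intervalIntegral.integral_congr; intro l _; simp; ring
    rw [this] at hftc
    linarith
  -- IBP 2 : ∫ x g² h = -(1/3) G4
  have hIBP2 : (∫ l in (0:ℝ)..π, x l * g l ^ 2 * h l) = -(1/3) * G4 := by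
    have hftc : ∫ l in (0:ℝ)..π, (g l ^ 4 + 3 * (x l * g l ^ 2 * h l))
        = x π * g π ^ 3 - x 0 * g 0 ^ 3 := by
      apply intervalIntegral.integral_eq_sub_of_hasDerivAt_of_le pi_nonneg
        (hxc.mul (hgc.pow 3))
        (fun l hl => by
          have hd : HasDerivAt (x * g ^ 3) _ l := (hxd l hl).mul ((hgd l hl).pow 3)
          exact hd.congr_deriv (by
            simp only [Pi.add_apply, Pi.mul_apply, Pi.pow_apply]
            push_cast
            ring))
        (contii (((hgc.pow 4)).add
          (continuousOn_const.mul ((hxc.mul (hgc.pow 2)).mul hhc))))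
    rw [hx0, hxpi, zero_mul, zero_mul, sub_zero] at hftc
    rw [intervalIntegral.integral_add hg4i (hxg2hi.const_mul 3),
      intervalIntegral.integral_const_mul] at hftc
    rw [← hG4] at hftc
    linarith
  -- Poincaré : Z ≤ H
  have hZnn : 0 ≤ Z := intervalIntegral.integral_nonneg pi_nonneg (fun l _ => sq_nonneg _)
  have hHnn : 0 ≤ H := intervalIntegral.integral_nonneg pi_nonneg (fun l _ => sq_nonneg _)
  have hG4nn : 0 ≤ G4 := intervalIntegral.integral_nonneg pi_nonneg
    (fun l _ => by positivity)
  have hpoin : Z ≤ H := by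
    have hcs := cs hx2i hh2i hxhi
    rw [hIBP1] at hcs
    have hwir : (∫ l in (0:ℝ)..π, (x l) ^ 2) ≤ Z := wirtinger_s15 hxc hgc hxd hx0 hxpi
    have hx2nn : 0 ≤ ∫ l in (0:ℝ)..π, (x l) ^ 2 :=
      intervalIntegral.integral_nonneg pi_nonneg (fun l _ => sq_nonneg _)
    nlinarith [hcs, hwir, hZnn, hHnn, hx2nn]
  -- Cauchy-Schwarz : Z² ≤ π G4
  have hZ2 : Z ^ 2 ≤ π * G4 := by
    have hone : IntervalIntegrable (fun _ : ℝ => (1:ℝ) ^ 2) volume 0 π :=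
      intervalIntegrable_const
    have hcs := cs (f := fun l => g l ^ 2) (g := fun _ => (1:ℝ))
      (by simpa [← pow_mul] using hg4i) hone (by simpa using hg2i)
    simp only [mul_one, one_pow] at hcs
    rw [intervalIntegral.integral_const, smul_eq_mul, sub_zero, mul_one] at hcs
    have : (∫ l in (0:ℝ)..π, (g l ^ 2) ^ 2) = G4 := by
      rw [hG4]; apply intervalIntegral.integral_congr; intro l _; simp [← pow_mul]
    rw [this] at hcs
    rw [← hZ] at hcs
    linarith [hcs]
  -- Young : -2 ∫ h u ≤ ω H + (1/ω) U
  have hyoung : -2 * (∫ l in (0:ℝ)..π, h l * u l) ≤ ω * H + (1/ω) * U := by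
    have hmono : (∫ l in (0:ℝ)..π, (-2) * (h l * u l))
        ≤ ∫ l in (0:ℝ)..π, (ω * h l ^ 2 + (1/ω) * u l ^ 2) := by
      apply intervalIntegral.integral_mono_on pi_nonneg (hhui.const_mul (-2))
        ((hh2i.const_mul ω).add (hu2i.const_mul (1/ω)))
      intro l _
      have key : 0 ≤ (1/ω) * (ω * h l + u l) ^ 2 := by positivity
      have hexp : (1/ω) * (ω * h l + u l) ^ 2
          = ω * h l ^ 2 + 2 * (h l * u l) + (1/ω) * u l ^ 2 := by
        field_simp
        ring
      nlinarith [key, hexp]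
    rw [intervalIntegral.integral_const_mul,
      intervalIntegral.integral_add (hh2i.const_mul ω) (hu2i.const_mul (1/ω)),
      intervalIntegral.integral_const_mul, intervalIntegral.integral_const_mul] at hmono
    rw [← hH, ← hU] at hmono
    linarith
  -- Expand the main integral
  have hexp : (∫ l in (0:ℝ)..π, h l * (h l + a * x l - b * x l * (g l) ^ 2 + u l))
      = H + a * (∫ l in (0:ℝ)..π, x l * h l)
        - b * (∫ l in (0:ℝ)..π, x l * g l ^ 2 * h l)
        + ∫ l in (0:ℝ)..π, h l * u l := by
    have : (∫ l in (0:ℝ)..π, h l * (h l + a * x l - b * x l * (g l) ^ 2 + u l))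
        = ∫ l in (0:ℝ)..π,
            (h l ^ 2 + a * (x l * h l) - b * (x l * g l ^ 2 * h l) + h l * u l) := by
      apply intervalIntegral.integral_congr; intro l _; simp; ring
    rw [this,
      intervalIntegral.integral_add
        (((hh2i.add (hxhi.const_mul a)).sub (hxg2hi.const_mul b))) hhui,
      intervalIntegral.integral_sub (hh2i.add (hxhi.const_mul a)) (hxg2hi.const_mul b),
      intervalIntegral.integral_add hh2i (hxhi.const_mul a),
      intervalIntegral.integral_const_mul, intervalIntegral.integral_const_mul, ← hH]
  rw [hexp, hIBP1, hIBP2]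
  -- final arithmetic
  have hbG4 : (2 * b / (3 * π)) * Z ^ 2 ≤ (2 * b / 3) * G4 := by
    rw [div_mul_eq_mul_div, div_le_iff₀ (by positivity : (0:ℝ) < 3 * π)]
    calc 2 * b * Z ^ 2 ≤ 2 * b * (π * G4) := by
          apply mul_le_mul_of_nonneg_left hZ2 (by positivity)
      _ = 2 * b / 3 * G4 * (3 * π) := by ring
  have h2ω : 0 ≤ (2 - ω) * (H - Z) := mul_nonneg (by linarith) (by linarith)
  nlinarith [hyoung, hbG4, h2ω, hG4nn, mul_nonneg hb hG4nn]
end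

section
/- Let b > 0 and a ∈ ℝ. Let x : [0,π] → ℝ be twice continuously differentiable with x(0) = x(π) = 0, and let u : [0,π] → ℝ be continuously differentiable with u(0) = u(π) = 0. Then, writing Z := ∫₀^π x'(l)² dl, it holds that −2∫₀^π x''(l) · ( x''(l) + a·x(l) − b·x(l)·x'(l)² + u(l) ) dl ≤ −2(1 − a)·Z − (b/(3π))·Z² + 2·(6/b)^{1/3}·∫₀^π |u'(l)|^{4/3} dl. -/
open Real MeasureTheory intervalIntegral

open Set


lemma young_pt (b : ℝ) (hb : 0 < b) (s r : ℝ) :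
    2 * (s * r) ≤ (b/3) * s^4 + (2 * (6/b) ^ ((1:ℝ)/3)) * |r| ^ ((4:ℝ)/3) := by
  have hs : (0:ℝ) ≤ |s| := abs_nonneg s
  have hr : (0:ℝ) ≤ |r| := abs_nonneg r
  set α : ℝ := (2*b/3) ^ ((1:ℝ)/4) with hα
  have hα_pos : 0 < α := rpow_pos_of_pos (by linarith) _
  have hα4 : α ^ (4:ℕ) = 2*b/3 := by
    rw [hα, ← rpow_natCast ((2*b/3) ^ ((1:ℝ)/4)) 4, ← rpow_mul (by linarith)]
    norm_num
  have hconj : (4:ℝ).HolderConjugate (4/3) := ⟨by norm_num, by norm_num, by norm_num⟩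
  have hY := Real.young_inequality_of_nonneg (mul_nonneg hα_pos.le hs)
    (div_nonneg hr hα_pos.le) hconj
  have h1 : α * |s| * (|r|/α) = |s| * |r| := by field_simp
  have h2 : (α*|s|) ^ (4:ℝ) = (2*b/3) * |s|^(4:ℕ) := by
    rw [show (4:ℝ) = ((4:ℕ):ℝ) by norm_num, rpow_natCast, mul_pow, hα4]
  have h3 : (|r|/α) ^ ((4:ℝ)/3) = |r| ^ ((4:ℝ)/3) / (2*b/3) ^ ((1:ℝ)/3) := by
    rw [div_rpow hr hα_pos.le, hα, ← rpow_mul (by linarith : (0:ℝ) ≤ 2*b/3)]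
    norm_num
  rw [h1, h2, h3] at hY
  have hcoef : (3/4) / (2*b/3) ^ ((1:ℝ)/3) ≤ (6/b) ^ ((1:ℝ)/3) := by
    rw [div_le_iff₀ (rpow_pos_of_pos (by linarith) _), ← mul_rpow (by positivity) (by linarith)]
    have h34 : (3/4 : ℝ) = ((27:ℝ)/64) ^ ((1:ℝ)/3) := by
      rw [show (27:ℝ)/64 = (3/4)^(3:ℕ) by norm_num, ← rpow_natCast ((3:ℝ)/4) 3,
        ← rpow_mul (by norm_num)]
      norm_num
    rw [h34]
    apply rpow_le_rpow (by norm_num) _ (by norm_num)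
    rw [div_mul_eq_mul_div, le_div_iff₀ (by linarith)]
    nlinarith
  have hsr : s * r ≤ |s| * |r| := by
    calc s * r ≤ |s * r| := le_abs_self _
    _ = |s| * |r| := abs_mul s r
  have h4 : s^4 = |s|^(4:ℕ) := by rw [← abs_pow, abs_of_nonneg (by positivity)]
  have hrp : (0:ℝ) ≤ |r| ^ ((4:ℝ)/3) := rpow_nonneg hr _
  have h5 : |r| ^ ((4:ℝ)/3) / (2*b/3) ^ ((1:ℝ)/3) / (4/3)
      = (3/4) / (2*b/3) ^ ((1:ℝ)/3) * |r| ^ ((4:ℝ)/3) := by ring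
  rw [h5] at hY
  have h6 := mul_le_mul_of_nonneg_right hcoef hrp
  rw [h4]
  linarith


lemma ae_ne_pi : ∀ᵐ (l : ℝ), l ≠ Real.pi := by
  rw [MeasureTheory.ae_iff]
  simp only [ne_eq, not_not]
  rw [show {l : ℝ | l = Real.pi} = {Real.pi} by ext; simp]
  exact Real.volume_singleton

lemma wirtinger_aux (x f : ℝ → ℝ)
    (hxc : ContinuousOn x (Set.Icc 0 Real.pi))
    (hfc : ContinuousOn f (Set.Icc 0 Real.pi))
    (hxd : ∀ l ∈ Set.Ioo 0 Real.pi, HasDerivAt x (f l) l)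
    (hx0 : x 0 = 0) (hxpi : x Real.pi = 0) :
    ∫ l in (0:ℝ)..Real.pi, (x l)^2 ≤ ∫ l in (0:ℝ)..Real.pi, (f l)^2 := by
  have hπ : (0:ℝ) < Real.pi := Real.pi_pos
  obtain ⟨M0, hM0⟩ := isCompact_Icc.exists_bound_of_continuousOn hfc
  set M : ℝ := max M0 0 with hMdef
  have hMnn : 0 ≤ M := le_max_right _ _
  have hM : ∀ l ∈ Set.Icc 0 Real.pi, |f l| ≤ M :=
    fun l hl => le_trans (hM0 l hl) (le_max_left _ _)
  -- bound |x l| ≤ M * l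
  have hbd1 : ∀ l ∈ Set.Icc 0 Real.pi, |x l| ≤ M * l := by
    intro l hl
    have hFTC : ∫ t in (0:ℝ)..l, f t = x l - x 0 := by
      apply integral_eq_sub_of_hasDeriv_right_of_le hl.1
        (hxc.mono (Set.Icc_subset_Icc le_rfl hl.2))
        (fun t ht => (hxd t ⟨ht.1, lt_of_lt_of_le ht.2 hl.2⟩).hasDerivWithinAt)
      exact (hfc.mono (Set.Icc_subset_Icc le_rfl hl.2)).intervalIntegrable_of_Icc hl.1
    have := intervalIntegral.norm_integral_le_of_norm_le_const (C := M)
      (f := f) (a := 0) (b := l) (fun t ht => by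
        rw [Set.uIoc_of_le hl.1] at ht
        exact hM t ⟨ht.1.le, le_trans ht.2 hl.2⟩)
    rw [hFTC, hx0, sub_zero] at this
    simpa [abs_of_nonneg hl.1] using this
  have hbd2 : ∀ l ∈ Set.Icc 0 Real.pi, |x l| ≤ M * (Real.pi - l) := by
    intro l hl
    have hFTC : ∫ t in l..Real.pi, f t = x Real.pi - x l := by
      apply integral_eq_sub_of_hasDeriv_right_of_le hl.2
        (hxc.mono (Set.Icc_subset_Icc hl.1 le_rfl))
        (fun t ht => (hxd t ⟨lt_of_le_of_lt hl.1 ht.1, ht.2⟩).hasDerivWithinAt)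
      exact (hfc.mono (Set.Icc_subset_Icc hl.1 le_rfl)).intervalIntegrable_of_Icc hl.2
    have := intervalIntegral.norm_integral_le_of_norm_le_const (C := M)
      (f := f) (a := l) (b := Real.pi) (fun t ht => by
        rw [Set.uIoc_of_le hl.2] at ht
        exact hM t ⟨le_trans hl.1 ht.1.le, ht.2⟩)
    rw [hFTC, hxpi, zero_sub, norm_neg] at this
    simpa [abs_of_nonneg (sub_nonneg.2 hl.2)] using this
  -- the auxiliary function q = x * cot
  set q : ℝ → ℝ := fun l => x l * (Real.cos l / Real.sin l) with hq
  have hsin_pos : ∀ l ∈ Set.Ioo 0 Real.pi, 0 < Real.sin l :=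
    fun l hl => Real.sin_pos_of_pos_of_lt_pi hl.1 hl.2
  -- key bound on q
  have hqbd : ∀ l ∈ Set.Ioo 0 Real.pi, |q l| ≤ M * (Real.pi/2) := by
    have key : ∀ l s : ℝ, l ∈ Set.Ioo 0 Real.pi → 0 < s → |x l| ≤ M * s →
        2/Real.pi * s ≤ Real.sin l → |q l| ≤ M * (Real.pi/2) := by
      intro l s hl hs hxs hsins
      have hsl := hsin_pos l hl
      have hspos : (0:ℝ) < 2/Real.pi * s := by positivity
      calc |q l| = |x l| * (|Real.cos l| / Real.sin l) := by
            rw [hq, abs_mul, abs_div, abs_of_pos hsl]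
        _ ≤ (M * s) * (1 / Real.sin l) := by
            apply mul_le_mul hxs _ (by positivity) (by positivity)
            exact (div_le_div_iff_of_pos_right hsl).2 (Real.abs_cos_le_one l)
        _ ≤ (M * s) * (1 / (2/Real.pi * s)) := by
            apply mul_le_mul_of_nonneg_left _ (by positivity)
            exact one_div_le_one_div_of_le hspos hsins
        _ = M * (Real.pi / 2) := by
            field_simp
    intro l hl
    rcases le_or_gt l (Real.pi/2) with h | h
    · exact key l l hl hl.1 (hbd1 l ⟨hl.1.le, hl.2.le⟩)
        (Real.mul_le_sin hl.1.le h)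
    · have h2 : 2/Real.pi * (Real.pi - l) ≤ Real.sin l := by
        have := Real.mul_le_sin (x := Real.pi - l) (by linarith [hl.2]) (by linarith)
        rwa [Real.sin_pi_sub] at this
      exact key l (Real.pi - l) hl (by linarith [hl.2])
        (hbd2 l ⟨hl.1.le, hl.2.le⟩) h2
  -- the function G = x^2 * cot
  set G : ℝ → ℝ := fun l => x l * q l with hGdef
  have hG0 : G 0 = 0 := by simp [hGdef, hx0]
  have hGpi : G Real.pi = 0 := by simp [hGdef, hq, hxpi]
  have hGbd1 : ∀ m ∈ Set.Icc 0 Real.pi, ‖G m‖ ≤ M * (Real.pi/2) * (M * m) := by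
    intro m hm
    rcases eq_or_ne m 0 with rfl | h0
    · simp [hG0]
    rcases eq_or_ne m Real.pi with rfl | hp
    · rw [hGpi]
      simp only [norm_zero]
      positivity
    · have hmo : m ∈ Set.Ioo 0 Real.pi :=
        ⟨lt_of_le_of_ne hm.1 (Ne.symm h0), lt_of_le_of_ne hm.2 hp⟩
      calc ‖G m‖ = |x m| * |q m| := by rw [hGdef]; exact abs_mul _ _
        _ ≤ (M * m) * (M * (Real.pi/2)) :=
            mul_le_mul (hbd1 m hm) (hqbd m hmo) (abs_nonneg _) (mul_nonneg hMnn hm.1)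
        _ = M * (Real.pi/2) * (M * m) := by ring
  have hGbd2 : ∀ m ∈ Set.Icc 0 Real.pi, ‖G m‖ ≤ M * (Real.pi/2) * (M * (Real.pi - m)) := by
    intro m hm
    have hpm : (0:ℝ) ≤ Real.pi - m := by linarith [hm.2]
    rcases eq_or_ne m 0 with rfl | h0
    · rw [hG0]
      simp only [norm_zero]
      exact mul_nonneg (by positivity) (mul_nonneg hMnn hpm)
    rcases eq_or_ne m Real.pi with rfl | hp
    · rw [hGpi]
      simp only [norm_zero]
      exact mul_nonneg (by positivity) (mul_nonneg hMnn hpm)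
    · have hmo : m ∈ Set.Ioo 0 Real.pi :=
        ⟨lt_of_le_of_ne hm.1 (Ne.symm h0), lt_of_le_of_ne hm.2 hp⟩
      calc ‖G m‖ = |x m| * |q m| := by rw [hGdef]; exact abs_mul _ _
        _ ≤ (M * (Real.pi - m)) * (M * (Real.pi/2)) :=
            mul_le_mul (hbd2 m hm) (hqbd m hmo) (abs_nonneg _) (mul_nonneg hMnn hpm)
        _ = M * (Real.pi/2) * (M * (Real.pi - m)) := by ring
  have hGc : ContinuousOn G (Set.Icc 0 Real.pi) := by
    intro l hl
    rcases eq_or_ne l 0 with rfl | hl0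
    · rw [ContinuousWithinAt, hG0]
      apply squeeze_zero_norm' (Filter.eventually_of_mem self_mem_nhdsWithin hGbd1)
      have : Filter.Tendsto (fun m : ℝ => M * (Real.pi/2) * (M * m)) (nhds 0)
          (nhds (M * (Real.pi/2) * (M * 0))) :=
        (continuous_const.mul (continuous_const.mul continuous_id)).tendsto 0
      simpa using this.mono_left nhdsWithin_le_nhds
    rcases eq_or_ne l Real.pi with rfl | hlpi
    · rw [ContinuousWithinAt, hGpi]
      apply squeeze_zero_norm' (Filter.eventually_of_mem self_mem_nhdsWithin hGbd2)
      have : Filter.Tendsto (fun m : ℝ => M * (Real.pi/2) * (M * (Real.pi - m))) (nhds Real.pi)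
          (nhds (M * (Real.pi/2) * (M * (Real.pi - Real.pi)))) :=
        (continuous_const.mul (continuous_const.mul (continuous_const.sub continuous_id))).tendsto _
      simpa using this.mono_left nhdsWithin_le_nhds
    · have hlo : l ∈ Set.Ioo 0 Real.pi :=
        ⟨lt_of_le_of_ne hl.1 (Ne.symm hl0), lt_of_le_of_ne hl.2 hlpi⟩
      have hsl : Real.sin l ≠ 0 := (hsin_pos l hlo).ne'
      exact (hxc l hl).mul ((hxc l hl).mul
        ((Real.continuous_cos.continuousWithinAt).div
          (Real.continuous_sin.continuousWithinAt) hsl))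
  -- derivative of G on the open interval
  have hGd : ∀ l ∈ Set.Ioo 0 Real.pi,
      HasDerivAt G (f l^2 - x l^2 - (f l - q l)^2) l := by
    intro l hl
    have hsl : Real.sin l ≠ 0 := (hsin_pos l hl).ne'
    have hx' := hxd l hl
    have hc : HasDerivAt (fun m => Real.cos m / Real.sin m)
        ((-Real.sin l * Real.sin l - Real.cos l * Real.cos l) / Real.sin l ^ 2) l :=
      (Real.hasDerivAt_cos l).div (Real.hasDerivAt_sin l) hsl
    have hq' : HasDerivAt q
        (f l * (Real.cos l / Real.sin l) +
          x l * ((-Real.sin l * Real.sin l - Real.cos l * Real.cos l) / Real.sin l ^ 2)) l :=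
      hx'.mul hc
    have hG' : HasDerivAt G _ l := hx'.mul hq'
    convert hG' using 1
    rw [hq]
    field_simp
    ring_nf
  -- integrability
  have huIcc : Set.uIcc (0:ℝ) Real.pi = Set.Icc 0 Real.pi := Set.uIcc_of_le hπ.le
  have contInt : ∀ h : ℝ → ℝ, ContinuousOn h (Set.Icc 0 Real.pi) →
      IntervalIntegrable h volume 0 Real.pi :=
    fun h hh => hh.intervalIntegrable_of_Icc hπ.le
  have hf2_int : IntervalIntegrable (fun l => f l^2) volume 0 Real.pi :=
    contInt _ (hfc.pow 2)
  have hx2_int : IntervalIntegrable (fun l => x l^2) volume 0 Real.pi :=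
    contInt _ (hxc.pow 2)
  have hfm : AEStronglyMeasurable f (volume.restrict (Set.Ioc 0 Real.pi)) :=
    (hfc.aestronglyMeasurable measurableSet_Icc).mono_measure
      (Measure.restrict_mono Set.Ioc_subset_Icc_self le_rfl)
  have hxm : AEStronglyMeasurable x (volume.restrict (Set.Ioc 0 Real.pi)) :=
    (hxc.aestronglyMeasurable measurableSet_Icc).mono_measure
      (Measure.restrict_mono Set.Ioc_subset_Icc_self le_rfl)
  have hqm : AEStronglyMeasurable q (volume.restrict (Set.Ioc 0 Real.pi)) :=
    hxm.mul ((Real.measurable_cos.div Real.measurable_sin).aestronglyMeasurable)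
  have hfq_int : IntervalIntegrable (fun l => (f l - q l)^2) volume 0 Real.pi := by
    rw [intervalIntegrable_iff, Set.uIoc_of_le hπ.le]
    apply MeasureTheory.Integrable.mono'
      (g := fun _ => (M + M * (Real.pi/2))^2)
      (integrableOn_const measure_Ioc_lt_top.ne)
    · have h1 := hfm.sub hqm
      have : (fun l => (f l - q l)^2) = fun l => (f l - q l) * (f l - q l) := by
        funext l; ring
      rw [this]
      exact h1.mul h1
    · filter_upwards [ae_restrict_mem measurableSet_Ioc, ae_restrict_of_ae ae_ne_pi]
        with m hm hmne
      have hmo : m ∈ Set.Ioo 0 Real.pi := ⟨hm.1, lt_of_le_of_ne hm.2 hmne⟩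
      have h1 : |f m - q m| ≤ M + M * (Real.pi/2) := by
        calc |f m - q m| ≤ |f m| + |q m| := abs_sub _ _
          _ ≤ M + M * (Real.pi/2) :=
            add_le_add (hM m ⟨hm.1.le, hm.2⟩) (hqbd m hmo)
      calc ‖(f m - q m)^2‖ = |f m - q m|^2 := by
            rw [Real.norm_eq_abs, ← abs_pow, abs_of_nonneg (sq_nonneg _)]
        _ ≤ (M + M * (Real.pi/2))^2 := by
            apply pow_le_pow_left₀ (abs_nonneg _) h1
  have hsum_int : IntervalIntegrable
      (fun l => f l^2 - x l^2 - (f l - q l)^2) volume 0 Real.pi :=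
    (hf2_int.sub hx2_int).sub hfq_int
  have hFTC : ∫ l in (0:ℝ)..Real.pi, (f l^2 - x l^2 - (f l - q l)^2) = G Real.pi - G 0 :=
    integral_eq_sub_of_hasDeriv_right_of_le hπ.le hGc
      (fun l hl => (hGd l hl).hasDerivWithinAt) hsum_int
  rw [hG0, hGpi, sub_zero] at hFTC
  have hsplit : ∫ l in (0:ℝ)..Real.pi, (f l^2 - x l^2 - (f l - q l)^2)
      = (∫ l in (0:ℝ)..Real.pi, f l^2) - (∫ l in (0:ℝ)..Real.pi, x l^2)
        - ∫ l in (0:ℝ)..Real.pi, (f l - q l)^2 := by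
    rw [intervalIntegral.integral_sub (hf2_int.sub hx2_int) hfq_int,
      intervalIntegral.integral_sub hf2_int hx2_int]
  have hnn : 0 ≤ ∫ l in (0:ℝ)..Real.pi, (f l - q l)^2 :=
    intervalIntegral.integral_nonneg hπ.le (fun t _ => sq_nonneg _)
  linarith [hsplit.symm.trans hFTC]


set_option maxHeartbeats 1600000 in
/-- Alternative dissipation estimate (61) for the second subsystem of Example 1
of the paper, establishing ISS with respect to the input space
`W₀^{1,4/3}(0,π)`: the Lie derivative of `V₂(x) = ∫₀^π (x')² dl` along
`∂x/∂t = ∂²x/∂l² + a·x − b·x·(∂x/∂l)² + u` with Dirichlet boundary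
conditions. -/
theorem dissipation_estimate_61 (a b : ℝ) (hb : 0 < b)
    (x : ℝ → ℝ) (hx : ContDiffOn ℝ 2 x (Set.Icc 0 Real.pi))
    (hx0 : x 0 = 0) (hxpi : x Real.pi = 0)
    (u : ℝ → ℝ) (hu : ContDiffOn ℝ 1 u (Set.Icc 0 Real.pi))
    (hu0 : u 0 = 0) (hupi : u Real.pi = 0) :
    -2 * ∫ l in (0:ℝ)..Real.pi, deriv (deriv x) l *
        (deriv (deriv x) l + a * x l - b * x l * (deriv x l) ^ 2 + u l)
      ≤ -2 * (1 - a) * (∫ l in (0:ℝ)..Real.pi, (deriv x l) ^ 2)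
        - (b / (3 * Real.pi)) * (∫ l in (0:ℝ)..Real.pi, (deriv x l) ^ 2) ^ 2
        + 2 * (6 / b) ^ ((1:ℝ)/3) * ∫ l in (0:ℝ)..Real.pi, |deriv u l| ^ ((4:ℝ)/3) := by
  have hπ : (0:ℝ) < Real.pi := Real.pi_pos
  set S := Set.Icc (0:ℝ) Real.pi with hS
  have hUD : UniqueDiffOn ℝ S := uniqueDiffOn_Icc hπ
  set f := derivWithin x S with hfdef
  set g := derivWithin f S with hgdef
  set v := derivWithin u S with hvdef
  have hxc : ContinuousOn x S := hx.continuousOn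
  have hf_cd : ContDiffOn ℝ 1 f S := hx.derivWithin hUD (by norm_num)
  have hfc : ContinuousOn f S := hf_cd.continuousOn
  have hgc : ContinuousOn g S := hf_cd.continuousOn_derivWithin hUD le_rfl
  have huc : ContinuousOn u S := hu.continuousOn
  have hvc : ContinuousOn v S := hu.continuousOn_derivWithin hUD le_rfl
  have hmem : ∀ l ∈ Set.Ioo (0:ℝ) Real.pi, S ∈ nhds l := fun l hl => Icc_mem_nhds hl.1 hl.2
  have hxd : ∀ l ∈ Set.Ioo (0:ℝ) Real.pi, HasDerivAt x (f l) l := fun l hl =>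
    ((hx.differentiableOn (by norm_num)) l (Set.Ioo_subset_Icc_self hl)).hasDerivWithinAt.hasDerivAt
      (hmem l hl)
  have hfd : ∀ l ∈ Set.Ioo (0:ℝ) Real.pi, HasDerivAt f (g l) l := fun l hl =>
    ((hf_cd.differentiableOn (by norm_num)) l (Set.Ioo_subset_Icc_self hl)).hasDerivWithinAt.hasDerivAt
      (hmem l hl)
  have hud : ∀ l ∈ Set.Ioo (0:ℝ) Real.pi, HasDerivAt u (v l) l := fun l hl =>
    ((hu.differentiableOn (by norm_num)) l (Set.Ioo_subset_Icc_self hl)).hasDerivWithinAt.hasDerivAt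
      (hmem l hl)
  have hEx : ∀ l ∈ Set.Ioo (0:ℝ) Real.pi, deriv x l = f l := fun l hl => (hxd l hl).deriv
  have hEu : ∀ l ∈ Set.Ioo (0:ℝ) Real.pi, deriv u l = v l := fun l hl => (hud l hl).deriv
  have hExx : ∀ l ∈ Set.Ioo (0:ℝ) Real.pi, deriv (deriv x) l = g l := by
    intro l hl
    have hev : deriv x =ᶠ[nhds l] f := by
      filter_upwards [isOpen_Ioo.mem_nhds hl] with m hm
      exact hEx m hm
    rw [hev.deriv_eq]
    exact (hfd l hl).deriv
  have hae : ∀ᵐ (l:ℝ), l ∈ Set.uIoc (0:ℝ) Real.pi → l ∈ Set.Ioo (0:ℝ) Real.pi := by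
    filter_upwards [ae_ne_pi] with m hm hmem
    rw [Set.uIoc_of_le hπ.le] at hmem
    exact ⟨hmem.1, lt_of_le_of_ne hmem.2 hm⟩
  have hI0 : (∫ l in (0:ℝ)..Real.pi, deriv (deriv x) l *
        (deriv (deriv x) l + a * x l - b * x l * (deriv x l) ^ 2 + u l))
      = ∫ l in (0:ℝ)..Real.pi, g l * (g l + a * x l - b * x l * (f l)^2 + u l) := by
    apply intervalIntegral.integral_congr_ae
    filter_upwards [hae] with m hm hmI
    rw [hExx m (hm hmI), hEx m (hm hmI)]
  have hZe : (∫ l in (0:ℝ)..Real.pi, (deriv x l)^2) = ∫ l in (0:ℝ)..Real.pi, (f l)^2 := by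
    apply intervalIntegral.integral_congr_ae
    filter_upwards [hae] with m hm hmI
    rw [hEx m (hm hmI)]
  have hUe : (∫ l in (0:ℝ)..Real.pi, |deriv u l| ^ ((4:ℝ)/3))
      = ∫ l in (0:ℝ)..Real.pi, |v l| ^ ((4:ℝ)/3) := by
    apply intervalIntegral.integral_congr_ae
    filter_upwards [hae] with m hm hmI
    rw [hEu m (hm hmI)]
  rw [hI0, hZe, hUe]
  set Z := ∫ l in (0:ℝ)..Real.pi, (f l)^2 with hZdef
  set B := ∫ l in (0:ℝ)..Real.pi, (g l)^2 with hBdef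
  set Q := ∫ l in (0:ℝ)..Real.pi, (f l)^4 with hQdef
  set FV := ∫ l in (0:ℝ)..Real.pi, f l * v l with hFVdef
  set U := ∫ l in (0:ℝ)..Real.pi, |v l| ^ ((4:ℝ)/3) with hUdef
  have contInt : ∀ h : ℝ → ℝ, ContinuousOn h S →
      IntervalIntegrable h volume 0 Real.pi :=
    fun h hh => hh.intervalIntegrable_of_Icc hπ.le
  have ftc : ∀ (F F' : ℝ → ℝ), ContinuousOn F S →
      (∀ l ∈ Set.Ioo (0:ℝ) Real.pi, HasDerivAt F (F' l) l) →
      IntervalIntegrable F' volume 0 Real.pi →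
      ∫ l in (0:ℝ)..Real.pi, F' l = F Real.pi - F 0 :=
    fun F F' h1 h2 h3 => integral_eq_sub_of_hasDeriv_right_of_le hπ.le h1
      (fun l hl => (h2 l hl).hasDerivWithinAt) h3
  -- integration by parts (A): ∫ x g = -Z
  have hxg_int := contInt (fun l => x l * g l) (hxc.mul hgc)
  have hf2_int := contInt (fun l => (f l)^2) (hfc.pow 2)
  have hA : (∫ l in (0:ℝ)..Real.pi, (x l * g l + (f l)^2)) = 0 := by
    have := ftc (fun l => x l * f l) (fun l => x l * g l + (f l)^2)
      (hxc.mul hfc)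
      (fun l hl => by
        have h : HasDerivAt (fun l => x l * f l) _ l := (hxd l hl).mul (hfd l hl)
        convert h using 1
        ring)
      (hxg_int.add hf2_int)
    simpa [hx0, hxpi] using this
  have hA' : (∫ l in (0:ℝ)..Real.pi, x l * g l) = -Z := by
    rw [intervalIntegral.integral_add hxg_int hf2_int] at hA
    rw [hZdef]
    linarith
  -- integration by parts (B): ∫ x f² g = -Q/3
  have hf4_int := contInt (fun l => (f l)^4) (hfc.pow 4)
  have hxf2g_int := contInt (fun l => x l * (f l)^2 * g l) ((hxc.mul (hfc.pow 2)).mul hgc)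
  have hB3 : (∫ l in (0:ℝ)..Real.pi, ((f l)^4 + 3 * (x l * (f l)^2 * g l))) = 0 := by
    have := ftc (fun l => x l * (f l)^3) (fun l => (f l)^4 + 3 * (x l * (f l)^2 * g l))
      (hxc.mul (hfc.pow 3))
      (fun l hl => by
        have h : HasDerivAt (fun l => x l * (f l)^3) _ l := (hxd l hl).mul ((hfd l hl).pow 3)
        convert h using 1
        push_cast
        ring)
      (hf4_int.add (hxf2g_int.const_mul 3))
    simpa [hx0, hxpi] using this
  have hB' : (∫ l in (0:ℝ)..Real.pi, x l * (f l)^2 * g l) = -(Q/3) := by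
    rw [intervalIntegral.integral_add hf4_int (hxf2g_int.const_mul 3),
      intervalIntegral.integral_const_mul] at hB3
    rw [hQdef]
    linarith
  -- integration by parts (C): ∫ g u = -FV
  have hgu_int := contInt (fun l => g l * u l) (hgc.mul huc)
  have hfv_int := contInt (fun l => f l * v l) (hfc.mul hvc)
  have hC : (∫ l in (0:ℝ)..Real.pi, (g l * u l + f l * v l)) = 0 := by
    have := ftc (fun l => f l * u l) (fun l => g l * u l + f l * v l)
      (hfc.mul huc)
      (fun l hl => by exact (hfd l hl).mul (hud l hl))
      (hgu_int.add hfv_int)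
    simpa [hu0, hupi] using this
  have hC' : (∫ l in (0:ℝ)..Real.pi, g l * u l) = -FV := by
    rw [intervalIntegral.integral_add hgu_int hfv_int] at hC
    rw [hFVdef]
    linarith
  -- split the main integral
  have hg2_int := contInt (fun l => (g l)^2) (hgc.pow 2)
  have hsplit : (∫ l in (0:ℝ)..Real.pi, g l * (g l + a * x l - b * x l * (f l)^2 + u l))
      = B + a * (∫ l in (0:ℝ)..Real.pi, x l * g l)
        - b * (∫ l in (0:ℝ)..Real.pi, x l * (f l)^2 * g l)
        + (∫ l in (0:ℝ)..Real.pi, g l * u l) := by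
    have heq : (fun l => g l * (g l + a * x l - b * x l * (f l)^2 + u l))
        = fun l => ((g l)^2 + a * (x l * g l) - b * (x l * (f l)^2 * g l)) + g l * u l :=
      funext fun l => by ring
    rw [heq, intervalIntegral.integral_add
      (((hg2_int.add (hxg_int.const_mul a)).sub (hxf2g_int.const_mul b))) hgu_int,
      intervalIntegral.integral_sub (hg2_int.add (hxg_int.const_mul a)) (hxf2g_int.const_mul b),
      intervalIntegral.integral_add hg2_int (hxg_int.const_mul a),
      intervalIntegral.integral_const_mul, intervalIntegral.integral_const_mul]
  rw [hsplit, hA', hB', hC']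
  -- Wirtinger: ∫ x² ≤ Z
  have hw : (∫ l in (0:ℝ)..Real.pi, (x l)^2) ≤ Z :=
    wirtinger_aux x f hxc hfc hxd hx0 hxpi
  -- Z ≤ B
  have hx2_int := contInt (fun l => (x l)^2) (hxc.pow 2)
  have hZB : Z ≤ B := by
    have hmono : -(∫ l in (0:ℝ)..Real.pi, x l * g l)
        ≤ ∫ l in (0:ℝ)..Real.pi, ((x l)^2 + (g l)^2)/2 := by
      rw [← intervalIntegral.integral_neg]
      apply intervalIntegral.integral_mono_on hπ.le hxg_int.neg
        (((hxc.pow 2).add (hgc.pow 2)).div_const 2 |> contInt (fun l => ((x l)^2 + (g l)^2)/2))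
      intro l _
      simp only [Pi.neg_apply]
      nlinarith [sq_nonneg (x l + g l)]
    rw [hA'] at hmono
    rw [intervalIntegral.integral_div,
      intervalIntegral.integral_add hx2_int hg2_int] at hmono
    rw [hBdef]
    linarith
  -- Z²/π ≤ Q
  have hQZ : Z^2 / Real.pi ≤ Q := by
    have h0 : 0 ≤ ∫ l in (0:ℝ)..Real.pi, ((f l)^2 - Z/Real.pi)^2 :=
      intervalIntegral.integral_nonneg hπ.le (fun t _ => sq_nonneg _)
    have hexp : (∫ l in (0:ℝ)..Real.pi, ((f l)^2 - Z/Real.pi)^2)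
        = Q - (2*(Z/Real.pi)) * Z + (Real.pi - 0) • ((Z/Real.pi)^2) := by
      have heq : (fun l => ((f l)^2 - Z/Real.pi)^2)
          = fun l => ((f l)^4 - (2*(Z/Real.pi)) * (f l)^2) + (Z/Real.pi)^2 :=
        funext fun l => by ring
      rw [heq, intervalIntegral.integral_add
        (hf4_int.sub ((hf2_int.const_mul _)))
        intervalIntegrable_const,
        intervalIntegral.integral_sub hf4_int (hf2_int.const_mul _),
        intervalIntegral.integral_const_mul, intervalIntegral.integral_const]
    rw [hexp] at h0
    have h1 : Z^2/Real.pi = (2*(Z/Real.pi)) * Z - (Real.pi - 0) • ((Z/Real.pi)^2) := by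
      rw [smul_eq_mul]
      field_simp
      ring
    linarith
  -- Young inequality integrated
  have hrpow_cont : ContinuousOn (fun l => |v l| ^ ((4:ℝ)/3)) S := by
    apply ContinuousOn.rpow_const hvc.abs
    intro l _
    right
    norm_num
  have hrpow_int := contInt _ hrpow_cont
  have hyoung : (∫ l in (0:ℝ)..Real.pi, 2 * (f l * v l))
      ≤ ∫ l in (0:ℝ)..Real.pi,
        ((b/3) * (f l)^4 + (2 * (6/b) ^ ((1:ℝ)/3)) * |v l| ^ ((4:ℝ)/3)) := by
    apply intervalIntegral.integral_mono_on hπ.le (hfv_int.const_mul 2)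
      (((hf4_int.const_mul _)).add (hrpow_int.const_mul _))
    intro l _
    exact young_pt b hb (f l) (v l)
  rw [intervalIntegral.integral_const_mul, intervalIntegral.integral_add
      (hf4_int.const_mul _) (hrpow_int.const_mul _),
    intervalIntegral.integral_const_mul, intervalIntegral.integral_const_mul] at hyoung
  -- final assembly
  have hbQ : (b/3) * (Z^2/Real.pi) ≤ (b/3) * Q :=
    mul_le_mul_of_nonneg_left hQZ (by positivity)
  have heq2 : (b/3) * (Z^2/Real.pi) = b/(3*Real.pi) * Z^2 := by
    field_simp
  nlinarith [hyoung, hZB, hbQ]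
end

section
/- Let x₁ : [0,π] → ℝ be twice continuously differentiable with x₁(0) = x₁(π) = 0, and let x₂ : [0,π] → ℝ be continuously differentiable with x₂(0) = x₂(π) = 0. Then ( 2∫₀^π x₁(l) · ( x₁''(l) + x₁(l)·x₂(l)⁴ ) dl ) / ( 1 + ∫₀^π x₁(l)² dl ) ≤ −2·(∫₀^π x₁(l)² dl)/(1 + ∫₀^π x₁(l)² dl) + 8·( ∫₀^π x₂'(l)² dl )². -/
open Real MeasureTheory intervalIntegral Set Filter Topology


lemma cs_lemma (f : ℝ → ℝ) {a b : ℝ} (hab : a ≤ b)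
    (hf : ContinuousOn f (Set.Icc a b)) :
    (∫ l in a..b, f l) ^ 2 ≤ (b - a) * ∫ l in a..b, (f l) ^ 2 := by
  rcases eq_or_lt_of_le hab with rfl | hlt
  · simp
  have hba : (0:ℝ) < b - a := by linarith
  have huIcc : Set.uIcc a b = Set.Icc a b := Set.uIcc_of_le hab
  have hint : IntervalIntegrable f volume a b := (huIcc ▸ hf).intervalIntegrable
  have hint2 : IntervalIntegrable (fun l => (f l) ^ 2) volume a b :=
    ((huIcc ▸ hf).pow 2).intervalIntegrable
  set M := ∫ l in a..b, f l with hM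
  set c := M / (b - a) with hc
  have h0 : 0 ≤ ∫ l in a..b, (f l - c) ^ 2 :=
    intervalIntegral.integral_nonneg hab (fun _ _ => sq_nonneg _)
  have hexp : ∫ l in a..b, (f l - c) ^ 2
      = (∫ l in a..b, (f l) ^ 2) - 2 * c * M + c ^ 2 * (b - a) := by
    have heq : ∀ l, (f l - c) ^ 2 = (f l) ^ 2 - (2 * c) * f l + c ^ 2 := by intro l; ring
    simp_rw [heq]
    rw [intervalIntegral.integral_add (hint2.sub (hint.const_mul _)) intervalIntegrable_const,
      intervalIntegral.integral_sub hint2 (hint.const_mul _),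
      intervalIntegral.integral_const_mul, intervalIntegral.integral_const]
    simp [smul_eq_mul]; ring
  rw [hexp, hc] at h0
  have h1 : 0 ≤ (∫ l in a..b, (f l) ^ 2) - M ^ 2 / (b - a) := by
    have : 2 * (M / (b - a)) * M - (M / (b - a)) ^ 2 * (b - a) = M ^ 2 / (b - a) := by
      field_simp; ring
    linarith [h0, this]
  have h2 : M ^ 2 / (b - a) ≤ ∫ l in a..b, (f l) ^ 2 := by linarith
  rw [div_le_iff₀ hba] at h2
  linarith [h2]

lemma agmon_lemma (x₂ : ℝ → ℝ) (hx₂ : ContDiffOn ℝ 1 x₂ (Set.Icc 0 Real.pi))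
    (h0 : x₂ 0 = 0) (hπ : x₂ Real.pi = 0) {l : ℝ} (hl : l ∈ Set.Icc 0 Real.pi) :
    (x₂ l) ^ 2 ≤ 2 * ∫ t in (0:ℝ)..Real.pi, (derivWithin x₂ (Set.Icc 0 Real.pi) t) ^ 2 := by
  set g := derivWithin x₂ (Set.Icc 0 Real.pi) with hg
  have hgc : ContinuousOn g (Set.Icc 0 Real.pi) :=
    hx₂.continuousOn_derivWithin (uniqueDiffOn_Icc Real.pi_pos) le_rfl
  have hder : ∀ t ∈ Set.Ioo (0:ℝ) Real.pi, HasDerivAt x₂ (g t) t := by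
    intro t ht
    exact ((hx₂.differentiableOn (by norm_num) t (Set.Ioo_subset_Icc_self ht)).hasDerivWithinAt).hasDerivAt
      (Icc_mem_nhds ht.1 ht.2)
  have hg2nonneg : ∀ a b : ℝ, a ≤ b → (0:ℝ) ≤ ∫ t in a..b, (g t)^2 :=
    fun a b hab => intervalIntegral.integral_nonneg hab (fun _ _ => sq_nonneg _)
  have hsplit : (∫ t in (0:ℝ)..l, (g t)^2) + ∫ t in l..Real.pi, (g t)^2
      = ∫ t in (0:ℝ)..Real.pi, (g t)^2 := by
    apply intervalIntegral.integral_add_adjacent_intervals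
    · exact ((Set.uIcc_of_le hl.1 ▸ (hgc.mono (Set.Icc_subset_Icc le_rfl hl.2))).pow
        2).intervalIntegrable
    · exact ((Set.uIcc_of_le hl.2 ▸ (hgc.mono (Set.Icc_subset_Icc hl.1 le_rfl))).pow
        2).intervalIntegrable
  have hpile : Real.pi ≤ 4 := Real.pi_le_four
  rcases le_or_gt l (Real.pi/2) with hcase | hcase
  · -- left side
    have hftc : ∫ t in (0:ℝ)..l, g t = x₂ l - x₂ 0 := by
      apply intervalIntegral.integral_eq_sub_of_hasDeriv_right_of_le hl.1
        (hx₂.continuousOn.mono (Set.Icc_subset_Icc le_rfl hl.2))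
        (fun t ht => (hder t ⟨ht.1, lt_of_lt_of_le ht.2 hl.2⟩).hasDerivWithinAt)
      exact (Set.uIcc_of_le hl.1 ▸ (hgc.mono (Set.Icc_subset_Icc le_rfl hl.2))).intervalIntegrable
    have hsq : (x₂ l)^2 = (∫ t in (0:ℝ)..l, g t)^2 := by rw [hftc, h0]; ring
    have hcs := cs_lemma g hl.1 (hgc.mono (Set.Icc_subset_Icc le_rfl hl.2))
    rw [hsq]
    calc (∫ t in (0:ℝ)..l, g t)^2 ≤ (l - 0) * ∫ t in (0:ℝ)..l, (g t)^2 := hcs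
      _ ≤ 2 * ∫ t in (0:ℝ)..Real.pi, (g t)^2 := by
          apply mul_le_mul (by linarith) (by linarith [hg2nonneg l Real.pi hl.2, hsplit])
            (hg2nonneg 0 l hl.1) (by norm_num)
  · -- right side
    have hftc : ∫ t in l..Real.pi, g t = x₂ Real.pi - x₂ l := by
      apply intervalIntegral.integral_eq_sub_of_hasDeriv_right_of_le hl.2
        (hx₂.continuousOn.mono (Set.Icc_subset_Icc hl.1 le_rfl))
        (fun t ht => (hder t ⟨lt_of_le_of_lt hl.1 ht.1, ht.2⟩).hasDerivWithinAt)
      exact (Set.uIcc_of_le hl.2 ▸ (hgc.mono (Set.Icc_subset_Icc hl.1 le_rfl))).intervalIntegrable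
    have hsq : (x₂ l)^2 = (∫ t in l..Real.pi, g t)^2 := by rw [hftc, hπ]; ring
    have hcs := cs_lemma g hl.2 (hgc.mono (Set.Icc_subset_Icc hl.1 le_rfl))
    rw [hsq]
    calc (∫ t in l..Real.pi, g t)^2 ≤ (Real.pi - l) * ∫ t in l..Real.pi, (g t)^2 := hcs
      _ ≤ 2 * ∫ t in (0:ℝ)..Real.pi, (g t)^2 := by
          apply mul_le_mul (by linarith) (by linarith [hg2nonneg 0 l hl.1, hsplit])
            (hg2nonneg l Real.pi hl.2) (by norm_num)

lemma key_lemma (x₁ : ℝ → ℝ) (hx₁ : ContDiffOn ℝ 2 x₁ (Set.Icc 0 Real.pi))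
    (h0 : x₁ 0 = 0) (hπ : x₁ Real.pi = 0) :
    ∫ l in (0:ℝ)..Real.pi,
      (x₁ l * derivWithin (derivWithin x₁ (Set.Icc 0 Real.pi)) (Set.Icc 0 Real.pi) l
        + (x₁ l) ^ 2) ≤ 0 := by
  have uD : UniqueDiffOn ℝ (Set.Icc (0:ℝ) Real.pi) := uniqueDiffOn_Icc Real.pi_pos
  set g := derivWithin x₁ (Set.Icc 0 Real.pi) with hgdef
  set h := derivWithin g (Set.Icc 0 Real.pi) with hhdef
  have hg1 : ContDiffOn ℝ 1 g (Set.Icc 0 Real.pi) := hx₁.derivWithin uD (by norm_num)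
  have hgc : ContinuousOn g (Set.Icc 0 Real.pi) := hg1.continuousOn
  have hhc : ContinuousOn h (Set.Icc 0 Real.pi) := hg1.continuousOn_derivWithin uD le_rfl
  have hxc : ContinuousOn x₁ (Set.Icc 0 Real.pi) := hx₁.continuousOn
  have hxder : ∀ t ∈ Set.Ioo (0:ℝ) Real.pi, HasDerivAt x₁ (g t) t := fun t ht =>
    ((hx₁.differentiableOn (by norm_num) t (Set.Ioo_subset_Icc_self ht)).hasDerivWithinAt).hasDerivAt
      (Icc_mem_nhds ht.1 ht.2)
  have hgder : ∀ t ∈ Set.Ioo (0:ℝ) Real.pi, HasDerivAt g (h t) t := fun t ht =>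
    ((hg1.differentiableOn (by norm_num) t (Set.Ioo_subset_Icc_self ht)).hasDerivWithinAt).hasDerivAt
      (Icc_mem_nhds ht.1 ht.2)
  set q : ℝ → ℝ := fun l => x₁ l * h l + (x₁ l) ^ 2 with hqdef
  have hqc : ContinuousOn q (Set.Icc 0 Real.pi) := (hxc.mul hhc).add (hxc.pow 2)
  set Φ : ℝ → ℝ := fun l => x₁ l * g l - (x₁ l) ^ 2 * (Real.cos l / Real.sin l) with hΦdef
  set D : ℝ → ℝ := fun l => (g l * g l + x₁ l * h l)
      - ((2 * x₁ l * g l) * (Real.cos l / Real.sin l)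
        + (x₁ l) ^ 2 * ((-Real.sin l * Real.sin l - Real.cos l * Real.cos l) / (Real.sin l) ^ 2))
    with hDdef
  have hsin_pos : ∀ t ∈ Set.Ioo (0:ℝ) Real.pi, 0 < Real.sin t := fun t ht =>
    Real.sin_pos_of_pos_of_lt_pi ht.1 ht.2
  have hΦder : ∀ t ∈ Set.Ioo (0:ℝ) Real.pi, HasDerivAt Φ (D t) t := by
    intro t ht
    have hs : Real.sin t ≠ 0 := ne_of_gt (hsin_pos t ht)
    exact ((hxder t ht).mul (hgder t ht)).sub
      ((((hxder t ht).pow 2).congr_deriv (by ring)).mul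
        (((Real.hasDerivAt_cos t).div (Real.hasDerivAt_sin t) hs)))
  -- pointwise q ≤ D on Ioo
  have hqD : ∀ t ∈ Set.Ioo (0:ℝ) Real.pi, q t ≤ D t := by
    intro t ht
    have hs : Real.sin t ≠ 0 := ne_of_gt (hsin_pos t ht)
    have hpy := Real.sin_sq_add_cos_sq t
    have key : D t - q t = (g t * Real.sin t - x₁ t * Real.cos t) ^ 2 / (Real.sin t) ^ 2 := by
      simp only [hDdef, hqdef]
      field_simp
      ring_nf
    linarith [key ▸ div_nonneg (sq_nonneg (g t * Real.sin t - x₁ t * Real.cos t)) (sq_nonneg (Real.sin t))]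
  -- ε-step
  have hstep : ∀ ε ∈ Set.Ioo (0:ℝ) (Real.pi/2),
      ∫ l in ε..(Real.pi - ε), q l ≤ Φ (Real.pi - ε) - Φ ε := by
    intro ε hε
    have hsub : Set.Icc ε (Real.pi - ε) ⊆ Set.Ioo 0 Real.pi := fun t ht =>
      ⟨lt_of_lt_of_le hε.1 ht.1, lt_of_le_of_lt ht.2 (by linarith [hε.1])⟩
    have hab : ε ≤ Real.pi - ε := by linarith [hε.2]
    have hsubI : Set.Icc ε (Real.pi - ε) ⊆ Set.Icc 0 Real.pi := fun t ht =>
      Set.Ioo_subset_Icc_self (hsub ht)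
    have hDc : ContinuousOn D (Set.Icc ε (Real.pi - ε)) := by
      have hsinc : ContinuousOn Real.sin (Set.Icc ε (Real.pi - ε)) := Real.continuous_sin.continuousOn
      have hcosc : ContinuousOn Real.cos (Set.Icc ε (Real.pi - ε)) := Real.continuous_cos.continuousOn
      have hsne : ∀ t ∈ Set.Icc ε (Real.pi - ε), Real.sin t ≠ 0 := fun t ht =>
        ne_of_gt (hsin_pos t (hsub ht))
      have hsne2 : ∀ t ∈ Set.Icc ε (Real.pi - ε), (Real.sin t) ^ 2 ≠ 0 := fun t ht =>
        pow_ne_zero 2 (hsne t ht)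
      exact (((hgc.mono hsubI).mul (hgc.mono hsubI)).add
          ((hxc.mono hsubI).mul (hhc.mono hsubI))).sub
        ((((continuousOn_const.mul (hxc.mono hsubI)).mul (hgc.mono hsubI)).mul
            (hcosc.div hsinc hsne)).add
          (((hxc.mono hsubI).pow 2).mul
            ((((hsinc.neg.mul hsinc).sub (hcosc.mul hcosc))).div (hsinc.pow 2) hsne2)))
    have hDint : IntervalIntegrable D volume ε (Real.pi - ε) :=
      (Set.uIcc_of_le hab ▸ hDc).intervalIntegrable
    have hqint : IntervalIntegrable q volume ε (Real.pi - ε) :=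
      (Set.uIcc_of_le hab ▸ (hqc.mono hsubI)).intervalIntegrable
    have hFTC : ∫ l in ε..(Real.pi - ε), D l = Φ (Real.pi - ε) - Φ ε := by
      apply intervalIntegral.integral_eq_sub_of_hasDeriv_right_of_le hab
        (fun t ht => (hΦder t (hsub ht)).continuousAt.continuousWithinAt)
        (fun t ht => (hΦder t (hsub (Set.Ioo_subset_Icc_self ht))).hasDerivWithinAt)
        hDint
    calc ∫ l in ε..(Real.pi - ε), q l ≤ ∫ l in ε..(Real.pi - ε), D l :=
          intervalIntegral.integral_mono_on hab hqint hDint (fun t ht => hqD t (hsub ht))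
      _ = Φ (Real.pi - ε) - Φ ε := hFTC
  -- basic filter maps
  have hIoo_mem : Set.Ioo (0:ℝ) (Real.pi/2) ∈ 𝓝[>] (0:ℝ) :=
    Ioo_mem_nhdsGT_of_mem ⟨le_refl 0, half_pos Real.pi_pos⟩
  have hmap0 : Tendsto (fun ε : ℝ => ε) (𝓝[>] (0:ℝ)) (𝓝[Set.Ioo 0 Real.pi] 0) := by
    rw [nhdsWithin_Ioo_eq_nhdsGT Real.pi_pos]; exact tendsto_id
  have hmapπ : Tendsto (fun ε : ℝ => Real.pi - ε) (𝓝[>] (0:ℝ)) (𝓝[Set.Ioo 0 Real.pi] Real.pi) := by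
    rw [tendsto_nhdsWithin_iff]
    constructor
    · have : Tendsto (fun ε : ℝ => Real.pi - ε) (𝓝[>] (0:ℝ)) (𝓝 (Real.pi - 0)) :=
        (tendsto_const_nhds.sub (tendsto_id.mono_left nhdsWithin_le_nhds))
      simpa using this
    · filter_upwards [hIoo_mem] with ε hε
      exact ⟨by linarith [hε.1, hε.2, Real.pi_pos], by linarith [hε.1]⟩
  -- limit of the integrals
  set P : ℝ → ℝ := fun t => ∫ l in (0:ℝ)..t, q l with hPdef
  have hqintOn : IntegrableOn q (Set.Icc 0 Real.pi) volume := hqc.integrableOn_Icc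
  have hPc : ContinuousOn P (Set.Icc 0 Real.pi) := by
    have := continuousOn_primitive_interval
      (f := q) (μ := volume) (a := (0:ℝ)) (b := Real.pi)
      (by rwa [Set.uIcc_of_le Real.pi_pos.le])
    rwa [Set.uIcc_of_le Real.pi_pos.le] at this
  have hPπ : Tendsto (fun ε => P (Real.pi - ε)) (𝓝[>] (0:ℝ)) (𝓝 (P Real.pi)) :=
    ((hPc Real.pi (Set.right_mem_Icc.2 Real.pi_pos.le)).tendsto).comp
      (hmapπ.mono_right (nhdsWithin_mono _ Set.Ioo_subset_Icc_self))
  have hP0 : Tendsto (fun ε => P ε) (𝓝[>] (0:ℝ)) (𝓝 (P 0)) :=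
    ((hPc 0 (Set.left_mem_Icc.2 Real.pi_pos.le)).tendsto).comp
      (hmap0.mono_right (nhdsWithin_mono _ Set.Ioo_subset_Icc_self))
  have hlim1 : Tendsto (fun ε => ∫ l in ε..(Real.pi - ε), q l) (𝓝[>] (0:ℝ))
      (𝓝 (∫ l in (0:ℝ)..Real.pi, q l)) := by
    have hsub : Tendsto (fun ε => P (Real.pi - ε) - P ε) (𝓝[>] (0:ℝ))
        (𝓝 (∫ l in (0:ℝ)..Real.pi, q l)) := by
      have := hPπ.sub hP0
      have hP0val : P 0 = 0 := intervalIntegral.integral_same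
      rw [hP0val, sub_zero] at this
      exact this
    apply hsub.congr'
    filter_upwards [hIoo_mem] with ε hε
    have h1 : IntervalIntegrable q volume 0 (Real.pi - ε) :=
      (Set.uIcc_of_le (by linarith [hε.2, Real.pi_pos] : (0:ℝ) ≤ Real.pi - ε) ▸
        (hqc.mono (Set.Icc_subset_Icc le_rfl (by linarith [hε.1])))).intervalIntegrable
    have h2 : IntervalIntegrable q volume 0 ε :=
      (Set.uIcc_of_le hε.1.le ▸
        (hqc.mono (Set.Icc_subset_Icc le_rfl (by linarith [hε.2, Real.pi_pos])))).intervalIntegrable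
    exact intervalIntegral.integral_interval_sub_left h1 h2
  -- slope limits
  have hslope0 : Tendsto (fun ε => x₁ ε / ε) (𝓝[>] (0:ℝ)) (𝓝 (g 0)) := by
    have hd : HasDerivWithinAt x₁ (g 0) (Set.Icc 0 Real.pi) 0 :=
      (hx₁.differentiableOn (by norm_num) 0
        (Set.left_mem_Icc.2 Real.pi_pos.le)).hasDerivWithinAt
    have ht := hasDerivWithinAt_iff_tendsto_slope.mp hd
    have ht2 : Tendsto (slope x₁ 0) (𝓝[>] (0:ℝ)) (𝓝 (g 0)) := by
      apply ht.mono_left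
      rw [← nhdsWithin_Ioo_eq_nhdsGT Real.pi_pos]
      exact nhdsWithin_mono _ (fun t ht => ⟨Set.Ioo_subset_Icc_self ht, ne_of_gt ht.1⟩)
    apply ht2.congr
    intro ε
    simp [slope_def_field, h0]
  have hslopeπ : Tendsto (fun ε => x₁ (Real.pi - ε) / (-ε)) (𝓝[>] (0:ℝ)) (𝓝 (g Real.pi)) := by
    have hd : HasDerivWithinAt x₁ (g Real.pi) (Set.Icc 0 Real.pi) Real.pi :=
      (hx₁.differentiableOn (by norm_num) Real.pi
        (Set.right_mem_Icc.2 Real.pi_pos.le)).hasDerivWithinAt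
    have ht := hasDerivWithinAt_iff_tendsto_slope.mp hd
    have ht2 : Tendsto (fun ε => slope x₁ Real.pi (Real.pi - ε)) (𝓝[>] (0:ℝ)) (𝓝 (g Real.pi)) := by
      apply ht.comp
      apply hmapπ.mono_right
      exact nhdsWithin_mono _ (fun t ht => ⟨Set.Ioo_subset_Icc_self ht, ne_of_lt ht.2⟩)
    apply ht2.congr'
    filter_upwards [hIoo_mem] with ε hε
    rw [slope_def_field, hπ]
    congr 1 <;> ring
  have hsinratio : Tendsto (fun ε => ε / Real.sin ε) (𝓝[>] (0:ℝ)) (𝓝 1) := by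
    have hsd := hasDerivAt_iff_tendsto_slope.mp (Real.hasDerivAt_sin 0)
    rw [Real.cos_zero] at hsd
    have ht2 : Tendsto (fun ε => Real.sin ε / ε) (𝓝[>] (0:ℝ)) (𝓝 1) := by
      have := hsd.mono_left (nhdsWithin_mono _ (fun t ht => ne_of_gt ht : Set.Ioi (0:ℝ) ⊆ {(0:ℝ)}ᶜ))
      apply this.congr
      intro ε
      simp [slope_def_field]
    have := ht2.inv₀ one_ne_zero
    simpa [inv_div] using this
  have hcos1 : Tendsto (fun ε => Real.cos ε) (𝓝[>] (0:ℝ)) (𝓝 1) := by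
    have : Tendsto Real.cos (𝓝 (0:ℝ)) (𝓝 (Real.cos 0)) := Real.continuous_cos.tendsto 0
    rw [Real.cos_zero] at this
    exact this.mono_left nhdsWithin_le_nhds
  have hx0t : Tendsto (fun ε => x₁ ε) (𝓝[>] (0:ℝ)) (𝓝 0) := by
    have := ((hxc 0 (Set.left_mem_Icc.2 Real.pi_pos.le)).tendsto).comp
      (hmap0.mono_right (nhdsWithin_mono _ Set.Ioo_subset_Icc_self))
    rwa [h0] at this
  have hxπt : Tendsto (fun ε => x₁ (Real.pi - ε)) (𝓝[>] (0:ℝ)) (𝓝 0) := by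
    have := ((hxc Real.pi (Set.right_mem_Icc.2 Real.pi_pos.le)).tendsto).comp
      (hmapπ.mono_right (nhdsWithin_mono _ Set.Ioo_subset_Icc_self))
    rwa [hπ] at this
  have hg0t : Tendsto (fun ε => g ε) (𝓝[>] (0:ℝ)) (𝓝 (g 0)) :=
    ((hgc 0 (Set.left_mem_Icc.2 Real.pi_pos.le)).tendsto).comp
      (hmap0.mono_right (nhdsWithin_mono _ Set.Ioo_subset_Icc_self))
  have hgπt : Tendsto (fun ε => g (Real.pi - ε)) (𝓝[>] (0:ℝ)) (𝓝 (g Real.pi)) :=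
    ((hgc Real.pi (Set.right_mem_Icc.2 Real.pi_pos.le)).tendsto).comp
      (hmapπ.mono_right (nhdsWithin_mono _ Set.Ioo_subset_Icc_self))
  -- boundary limits of Φ
  have hΦ0 : Tendsto (fun ε => Φ ε) (𝓝[>] (0:ℝ)) (𝓝 0) := by
    have hT : Tendsto (fun ε => x₁ ε * g ε -
        x₁ ε * ((x₁ ε / ε) * Real.cos ε * (ε / Real.sin ε))) (𝓝[>] (0:ℝ))
        (𝓝 (0 * g 0 - 0 * ((g 0) * 1 * 1))) :=
      (hx0t.mul hg0t).sub (hx0t.mul ((hslope0.mul hcos1).mul hsinratio))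
    have hT' : (0 * g 0 - 0 * ((g 0) * 1 * 1) : ℝ) = 0 := by ring
    rw [hT'] at hT
    apply hT.congr'
    filter_upwards [hIoo_mem] with ε hε
    have hεne : ε ≠ 0 := ne_of_gt hε.1
    have hsne : Real.sin ε ≠ 0 := ne_of_gt (Real.sin_pos_of_pos_of_lt_pi hε.1
      (by linarith [hε.2, Real.pi_pos]))
    simp only [hΦdef]
    field_simp
  have hΦπ : Tendsto (fun ε => Φ (Real.pi - ε)) (𝓝[>] (0:ℝ)) (𝓝 0) := by
    have hT : Tendsto (fun ε => x₁ (Real.pi - ε) * g (Real.pi - ε) -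
        x₁ (Real.pi - ε) * ((x₁ (Real.pi - ε) / (-ε)) * Real.cos ε * (ε / Real.sin ε)))
        (𝓝[>] (0:ℝ)) (𝓝 (0 * g Real.pi - 0 * ((g Real.pi) * 1 * 1))) :=
      (hxπt.mul hgπt).sub (hxπt.mul ((hslopeπ.mul hcos1).mul hsinratio))
    have hT' : (0 * g Real.pi - 0 * ((g Real.pi) * 1 * 1) : ℝ) = 0 := by ring
    rw [hT'] at hT
    apply hT.congr'
    filter_upwards [hIoo_mem] with ε hε
    have hεne : ε ≠ 0 := ne_of_gt hε.1
    have hsne : Real.sin ε ≠ 0 := ne_of_gt (Real.sin_pos_of_pos_of_lt_pi hε.1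
      (by linarith [hε.2, Real.pi_pos]))
    simp only [hΦdef, Real.sin_pi_sub, Real.cos_pi_sub]
    field_simp
  have hlim2 : Tendsto (fun ε => Φ (Real.pi - ε) - Φ ε) (𝓝[>] (0:ℝ)) (𝓝 0) := by
    simpa using hΦπ.sub hΦ0
  have hfinal : ∫ l in (0:ℝ)..Real.pi, q l ≤ 0 := by
    apply le_of_tendsto_of_tendsto hlim1 hlim2
    filter_upwards [hIoo_mem] with ε hε
    exact hstep ε hε
  exact hfinal


/-- Dissipation estimate (54) for the first subsystem of Example 1 of the
paper: the Lie derivative of the iISS Lyapunov function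
`V₁(x₁) = ln(1 + ∫₀^π x₁² dl)` along `∂x₁/∂t = ∂²x₁/∂l² + x₁·x₂⁴` with
Dirichlet boundary conditions. -/
theorem dissipation_estimate_54 (x₁ : ℝ → ℝ)
    (hx₁ : ContDiffOn ℝ 2 x₁ (Set.Icc 0 Real.pi))
    (hx₁0 : x₁ 0 = 0) (hx₁pi : x₁ Real.pi = 0)
    (x₂ : ℝ → ℝ) (hx₂ : ContDiffOn ℝ 1 x₂ (Set.Icc 0 Real.pi))
    (hx₂0 : x₂ 0 = 0) (hx₂pi : x₂ Real.pi = 0) :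
    (2 * ∫ l in (0:ℝ)..Real.pi, x₁ l * (deriv (deriv x₁) l + x₁ l * (x₂ l) ^ 4)) /
        (1 + ∫ l in (0:ℝ)..Real.pi, (x₁ l) ^ 2)
      ≤ -2 * (∫ l in (0:ℝ)..Real.pi, (x₁ l) ^ 2) /
            (1 + ∫ l in (0:ℝ)..Real.pi, (x₁ l) ^ 2)
        + 8 * (∫ l in (0:ℝ)..Real.pi, (deriv x₂ l) ^ 2) ^ 2 := by
  have uD : UniqueDiffOn ℝ (Set.Icc (0:ℝ) Real.pi) := uniqueDiffOn_Icc Real.pi_pos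
  set g := derivWithin x₁ (Set.Icc 0 Real.pi) with hgdef
  set h := derivWithin g (Set.Icc 0 Real.pi) with hhdef
  set g₂ := derivWithin x₂ (Set.Icc 0 Real.pi) with hg2def
  have hg1 : ContDiffOn ℝ 1 g (Set.Icc 0 Real.pi) := hx₁.derivWithin uD (by norm_num)
  have hgc : ContinuousOn g (Set.Icc 0 Real.pi) := hg1.continuousOn
  have hhc : ContinuousOn h (Set.Icc 0 Real.pi) := hg1.continuousOn_derivWithin uD le_rfl
  have hxc : ContinuousOn x₁ (Set.Icc 0 Real.pi) := hx₁.continuousOn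
  have hx2c : ContinuousOn x₂ (Set.Icc 0 Real.pi) := hx₂.continuousOn
  have hg2c : ContinuousOn g₂ (Set.Icc 0 Real.pi) :=
    hx₂.continuousOn_derivWithin uD le_rfl
  have hxder : ∀ t ∈ Set.Ioo (0:ℝ) Real.pi, HasDerivAt x₁ (g t) t := fun t ht =>
    ((hx₁.differentiableOn (by norm_num) t
      (Set.Ioo_subset_Icc_self ht)).hasDerivWithinAt).hasDerivAt (Icc_mem_nhds ht.1 ht.2)
  have hgder : ∀ t ∈ Set.Ioo (0:ℝ) Real.pi, HasDerivAt g (h t) t := fun t ht =>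
    ((hg1.differentiableOn (by norm_num) t
      (Set.Ioo_subset_Icc_self ht)).hasDerivWithinAt).hasDerivAt (Icc_mem_nhds ht.1 ht.2)
  have hx2der : ∀ t ∈ Set.Ioo (0:ℝ) Real.pi, HasDerivAt x₂ (g₂ t) t := fun t ht =>
    ((hx₂.differentiableOn (by norm_num) t
      (Set.Ioo_subset_Icc_self ht)).hasDerivWithinAt).hasDerivAt (Icc_mem_nhds ht.1 ht.2)
  have hae : ∀ᵐ t : ℝ ∂volume, t ≠ Real.pi := by
    rw [MeasureTheory.ae_iff]
    simp only [ne_eq, not_not]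
    rw [show {a : ℝ | a = Real.pi} = {Real.pi} from rfl]
    exact measure_singleton _
  have hIoo_of_uIoc : ∀ t : ℝ, t ∈ Set.uIoc (0:ℝ) Real.pi → t ≠ Real.pi →
      t ∈ Set.Ioo (0:ℝ) Real.pi := by
    intro t ht hne
    rw [Set.uIoc_of_le Real.pi_pos.le] at ht
    exact ⟨ht.1, lt_of_le_of_ne ht.2 hne⟩
  -- rewrite the second-derivative integral
  have hcongr1 : (∫ l in (0:ℝ)..Real.pi, x₁ l * (deriv (deriv x₁) l + x₁ l * (x₂ l) ^ 4))
      = ∫ l in (0:ℝ)..Real.pi, x₁ l * (h l + x₁ l * (x₂ l) ^ 4) := by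
    apply intervalIntegral.integral_congr_ae
    filter_upwards [hae] with t hne hmem
    have ht : t ∈ Set.Ioo (0:ℝ) Real.pi := hIoo_of_uIoc t hmem hne
    have hev : deriv x₁ =ᶠ[𝓝 t] g := by
      filter_upwards [Ioo_mem_nhds ht.1 ht.2] with s hs
      exact (hxder s hs).deriv
    rw [hev.deriv_eq, (hgder t ht).deriv]
  have hcongr2 : (∫ l in (0:ℝ)..Real.pi, (deriv x₂ l) ^ 2)
      = ∫ l in (0:ℝ)..Real.pi, (g₂ l) ^ 2 := by
    apply intervalIntegral.integral_congr_ae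
    filter_upwards [hae] with t hne hmem
    have ht : t ∈ Set.Ioo (0:ℝ) Real.pi := hIoo_of_uIoc t hmem hne
    rw [(hx2der t ht).deriv]
  rw [hcongr1, hcongr2]
  set A := ∫ l in (0:ℝ)..Real.pi, (x₁ l) ^ 2 with hAdef
  set B := ∫ l in (0:ℝ)..Real.pi, (g₂ l) ^ 2 with hBdef
  have hA : 0 ≤ A := intervalIntegral.integral_nonneg Real.pi_pos.le (fun _ _ => sq_nonneg _)
  have hB : 0 ≤ B := intervalIntegral.integral_nonneg Real.pi_pos.le (fun _ _ => sq_nonneg _)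
  have hden : (0:ℝ) < 1 + A := by linarith
  have huIcc : Set.uIcc (0:ℝ) Real.pi = Set.Icc 0 Real.pi := Set.uIcc_of_le Real.pi_pos.le
  -- integrability facts
  have hqc : ContinuousOn (fun l => x₁ l * h l + (x₁ l) ^ 2) (Set.Icc 0 Real.pi) :=
    (hxc.mul hhc).add (hxc.pow 2)
  have hsc : ContinuousOn (fun l => (x₁ l) ^ 2 * (x₂ l) ^ 4 - (x₁ l) ^ 2)
      (Set.Icc 0 Real.pi) := ((hxc.pow 2).mul (hx2c.pow 4)).sub (hxc.pow 2)
  have hqint : IntervalIntegrable (fun l => x₁ l * h l + (x₁ l) ^ 2) volume 0 Real.pi :=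
    (huIcc ▸ hqc).intervalIntegrable
  have hsint : IntervalIntegrable (fun l => (x₁ l) ^ 2 * (x₂ l) ^ 4 - (x₁ l) ^ 2)
      volume 0 Real.pi := (huIcc ▸ hsc).intervalIntegrable
  -- split the integral
  have hsplit : (∫ l in (0:ℝ)..Real.pi, x₁ l * (h l + x₁ l * (x₂ l) ^ 4))
      = (∫ l in (0:ℝ)..Real.pi, (x₁ l * h l + (x₁ l) ^ 2))
        + ∫ l in (0:ℝ)..Real.pi, ((x₁ l) ^ 2 * (x₂ l) ^ 4 - (x₁ l) ^ 2) := by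
    rw [← intervalIntegral.integral_add hqint hsint]
    apply intervalIntegral.integral_congr
    intro l _
    ring
  have hkey : (∫ l in (0:ℝ)..Real.pi, (x₁ l * h l + (x₁ l) ^ 2)) ≤ 0 :=
    key_lemma x₁ hx₁ hx₁0 hx₁pi
  -- bound the nonlinear term
  have hbound : (∫ l in (0:ℝ)..Real.pi, ((x₁ l) ^ 2 * (x₂ l) ^ 4 - (x₁ l) ^ 2))
      ≤ (4 * B ^ 2 - 1) * A := by
    have hmono : ∀ l ∈ Set.Icc (0:ℝ) Real.pi,
        (x₁ l) ^ 2 * (x₂ l) ^ 4 - (x₁ l) ^ 2 ≤ (4 * B ^ 2 - 1) * (x₁ l) ^ 2 := by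
      intro l hl
      have hag : (x₂ l) ^ 2 ≤ 2 * B := agmon_lemma x₂ hx₂ hx₂0 hx₂pi hl
      have h4 : (x₂ l) ^ 4 ≤ 4 * B ^ 2 := by nlinarith [sq_nonneg (x₂ l)]
      nlinarith [sq_nonneg (x₁ l)]
    have hcint : IntervalIntegrable (fun l => (4 * B ^ 2 - 1) * (x₁ l) ^ 2)
        volume 0 Real.pi := (huIcc ▸ (continuousOn_const.mul (hxc.pow 2))).intervalIntegrable
    calc (∫ l in (0:ℝ)..Real.pi, ((x₁ l) ^ 2 * (x₂ l) ^ 4 - (x₁ l) ^ 2))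
        ≤ ∫ l in (0:ℝ)..Real.pi, (4 * B ^ 2 - 1) * (x₁ l) ^ 2 :=
          intervalIntegral.integral_mono_on Real.pi_pos.le hsint hcint hmono
      _ = (4 * B ^ 2 - 1) * A := by rw [intervalIntegral.integral_const_mul]
  have hN : (∫ l in (0:ℝ)..Real.pi, x₁ l * (h l + x₁ l * (x₂ l) ^ 4))
      ≤ (4 * B ^ 2 - 1) * A := by rw [hsplit]; linarith
  -- final arithmetic
  have hnum : 2 * (∫ l in (0:ℝ)..Real.pi, x₁ l * (h l + x₁ l * (x₂ l) ^ 4))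
      ≤ -2 * A + 8 * B ^ 2 * (1 + A) := by nlinarith [hN, hB, hA, sq_nonneg B]
  calc (2 * ∫ l in (0:ℝ)..Real.pi, x₁ l * (h l + x₁ l * (x₂ l) ^ 4)) / (1 + A)
      ≤ (-2 * A + 8 * B ^ 2 * (1 + A)) / (1 + A) := by
        exact div_le_div_of_nonneg_right hnum hden.le
    _ = -2 * A / (1 + A) + 8 * B ^ 2 := by field_simp
end

section
/- For every real number c with 1 < c ≤ 2 there exists ψ > 0 such that ψ^{−ψ/(ψ+1)} < c/(ψ+1) and c/(ψ+1) ≤ 1. -/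
open Real Filter Topology

/-- The claim after Theorem 6.1 of the paper: for every `c` with `1 < c ≤ 2`
there exists `ψ > 0` satisfying `ψ^{−ψ/(ψ+1)} < c/(ψ+1) ≤ 1`. -/
theorem exists_psi (c : ℝ) (hc1 : 1 < c) (hc2 : c ≤ 2) :
    ∃ ψ : ℝ, 0 < ψ ∧ ψ ^ (-(ψ / (ψ + 1))) < c / (ψ + 1) ∧ c / (ψ + 1) ≤ 1 := by
  have hg : Tendsto (fun x : ℝ => (1 + 1 / x) * x ^ ((1 : ℝ) / x)) atTop (𝓝 1) := by
    have h1 : Tendsto (fun x : ℝ => 1 + 1 / x) atTop (𝓝 1) := by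
      have := tendsto_inv_atTop_zero (𝕜 := ℝ)
      simpa [one_div] using tendsto_const_nhds.add this
    simpa using h1.mul tendsto_rpow_div
  have hev : ∀ᶠ x : ℝ in atTop, (1 + 1 / x) * x ^ ((1 : ℝ) / x) < c :=
    hg.eventually_lt_const hc1
  obtain ⟨ψ, hψ1, hψg⟩ := ((eventually_ge_atTop (1 : ℝ)).and hev).exists
  have hψ0 : (0 : ℝ) < ψ := lt_of_lt_of_le one_pos hψ1
  have hψ10 : (0 : ℝ) < ψ + 1 := by linarith
  refine ⟨ψ, hψ0, ?_, ?_⟩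
  · -- ψ^{-(ψ/(ψ+1))} = ψ^{1/(ψ+1)} / ψ ≤ ψ^{1/ψ}/ψ < c/(ψ+1)
    have hrw : ψ ^ (-(ψ / (ψ + 1))) = ψ ^ ((1 : ℝ) / (ψ + 1)) / ψ := by
      rw [show -(ψ / (ψ + 1)) = 1 / (ψ + 1) - 1 by field_simp; ring, Real.rpow_sub hψ0,
        Real.rpow_one]
    rw [hrw]
    have hle : ψ ^ ((1 : ℝ) / (ψ + 1)) ≤ ψ ^ ((1 : ℝ) / ψ) := by
      apply Real.rpow_le_rpow_of_exponent_le hψ1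
      apply div_le_div_of_nonneg_left one_pos.le hψ0
      linarith
    have key : (ψ + 1) * (ψ ^ ((1 : ℝ) / ψ) / ψ) < c := by
      have : (ψ + 1) * (ψ ^ ((1 : ℝ) / ψ) / ψ) = (1 + 1 / ψ) * ψ ^ ((1 : ℝ) / ψ) := by
        field_simp
      rw [this]
      exact hψg
    rw [lt_div_iff₀ hψ10]
    calc ψ ^ ((1 : ℝ) / (ψ + 1)) / ψ * (ψ + 1) ≤ ψ ^ ((1 : ℝ) / ψ) / ψ * (ψ + 1) := by
          gcongr
      _ < c := by rw [mul_comm]; exact key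
  · rw [div_le_one hψ10]; linarith
end
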